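/- arXiv:1302.1763 — 9 statements merged into one kernel-verified Lean document; each statement's English description precedes it below -/
import Mathlib

section
/- Suppose z₀ and z₁ are positive reals satisfying z₁ = 1/(1 − g z₁ − 2 g z₀) and z₀ = z₁ + (𝔤−1)/(1 − g z₁ − g z₀), with 1 − g z₁ − 2gz₀ > 0 and 1 − g z₁ − g z₀ > 0. Then z₁ satisfies the quartic equation 3g² z₁⁴ − 4g z₁³ + (1 + 2g(1−2𝔤)) z₁² − 1 = 0. -/
/-- If `z₀, z₁ > 0` satisfy the recursion fixed-point equations
`z₁ = 1/(1 - g z₁ - 2g z₀)` and `z₀ = z₁ + (𝔤-1)/(1 - g z₁ - g z₀)` (with nonvanishing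
denominators), then `z₁` satisfies the quartic
`3g² z₁⁴ - 4g z₁³ + (1 + 2g(1-2𝔤)) z₁² - 1 = 0`. -/
theorem stmt_6 (g 𝔤 z₀ z₁ : ℝ) (hg : 0 < g)
    (hz₀ : 0 < z₀) (hz₁ : 0 < z₁)
    (hden₁ : 0 < 1 - g * z₁ - 2 * g * z₀) (hden₂ : 0 < 1 - g * z₁ - g * z₀)
    (heq₁ : z₁ = 1 / (1 - g * z₁ - 2 * g * z₀))
    (heq₂ : z₀ = z₁ + (𝔤 - 1) / (1 - g * z₁ - g * z₀)) :
    3 * g ^ 2 * z₁ ^ 4 - 4 * g * z₁ ^ 3 + (1 + 2 * g * (1 - 2 * 𝔤)) * z₁ ^ 2 - 1 = 0 := by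
  have hd₁ : (1 - g * z₁ - 2 * g * z₀) ≠ 0 := ne_of_gt hden₁
  have hd₂ : (1 - g * z₁ - g * z₀) ≠ 0 := ne_of_gt hden₂
  rw [eq_div_iff hd₁] at heq₁
  have h2 : z₀ - z₁ = (𝔤 - 1) / (1 - g * z₁ - g * z₀) := by linarith
  rw [eq_div_iff hd₂] at h2
  have h1 := heq₁
  linear_combination (-2*g*z₁*z₀ + z₁ + g*z₁^2 + 1) * h1 + 4*g*z₁^2 * h2
end

section
/- Let λ > 0 and 𝔤_s > 0 with λ³ > (27/4)𝔤_s², and let α be the largest real root of α³ − λα + 𝔤_s = 0. Define Σ = (1/2)√(4α² − 2𝔤_s/α). Then Σ is well defined (4α² − 2𝔤_s/α > 0), and B := α − Σ together with Σ satisfy 𝔤_s = 2B(B² + 3BΣ + 2Σ²) and λ = 3B² + 6BΣ + Σ². -/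
/-- Let `λ > 0`, `𝔤ₛ > 0` with `λ³ > (27/4)𝔤ₛ²`, and let `α` be the largest real root of
`α³ - λα + 𝔤ₛ = 0`. With `Σ := (1/2)√(4α² - 2𝔤ₛ/α)` one has `4α² - 2𝔤ₛ/α > 0`, and
`B := α - Σ` satisfies `𝔤ₛ = 2B(B² + 3BΣ + 2Σ²)` and `λ = 3B² + 6BΣ + Σ²`. -/
theorem stmt_9 (lam gs α : ℝ) (hlam : 0 < lam) (hgs : 0 < gs)
    (hcond : (27 / 4) * gs ^ 2 < lam ^ 3)
    (hroot : α ^ 3 - lam * α + gs = 0)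
    (hmax : ∀ β : ℝ, β ^ 3 - lam * β + gs = 0 → β ≤ α) :
    0 < 4 * α ^ 2 - 2 * gs / α ∧
      (gs = 2 * (α - (1 / 2) * Real.sqrt (4 * α ^ 2 - 2 * gs / α)) *
          ((α - (1 / 2) * Real.sqrt (4 * α ^ 2 - 2 * gs / α)) ^ 2
            + 3 * (α - (1 / 2) * Real.sqrt (4 * α ^ 2 - 2 * gs / α))
                * ((1 / 2) * Real.sqrt (4 * α ^ 2 - 2 * gs / α))
            + 2 * ((1 / 2) * Real.sqrt (4 * α ^ 2 - 2 * gs / α)) ^ 2) ∧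
        lam = 3 * (α - (1 / 2) * Real.sqrt (4 * α ^ 2 - 2 * gs / α)) ^ 2
            + 6 * (α - (1 / 2) * Real.sqrt (4 * α ^ 2 - 2 * gs / α))
                * ((1 / 2) * Real.sqrt (4 * α ^ 2 - 2 * gs / α))
            + ((1 / 2) * Real.sqrt (4 * α ^ 2 - 2 * gs / α)) ^ 2) := by
  -- notation
  set s0 := Real.sqrt (lam / 3) with hs0def
  have hs0pos : 0 < s0 := Real.sqrt_pos.mpr (by linarith)
  have hs0sq : s0 ^ 2 = lam / 3 := Real.sq_sqrt (by linarith)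
  set t := Real.sqrt lam + 1 with htdef
  have hsl : (Real.sqrt lam) ^ 2 = lam := Real.sq_sqrt hlam.le
  have hslnn : 0 ≤ Real.sqrt lam := Real.sqrt_nonneg _
  have hs0t : s0 ≤ t := by
    have : s0 ≤ Real.sqrt lam := Real.sqrt_le_sqrt (by linarith)
    linarith
  -- f s0 < 0
  have hfs0 : s0 ^ 3 - lam * s0 + gs < 0 := by
    have h1 : gs < (2 * lam / 3) * s0 := by
      nlinarith [mul_pos hlam hs0pos, sq_nonneg (gs - 2 * lam / 3 * s0),
        mul_pos (mul_pos hlam hlam) hs0pos]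
    nlinarith [hs0sq, hs0pos]
  -- f t > 0
  have hft : 0 < t ^ 3 - lam * t + gs := by
    rw [htdef]; nlinarith [hsl, hslnn, hgs, hlam, mul_nonneg hslnn hslnn, mul_nonneg (mul_nonneg hslnn hslnn) hslnn]
  -- a root above s0 exists
  have hcont : ContinuousOn (fun x : ℝ => x ^ 3 - lam * x + gs) (Set.Icc s0 t) := by
    fun_prop
  obtain ⟨c, hcmem, hfc⟩ := intermediate_value_Icc hs0t hcont
    (Set.mem_Icc.mpr ⟨hfs0.le, hft.le⟩)
  have hαc : c ≤ α := hmax c hfc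
  have hcs0 : s0 < c := lt_of_le_of_ne hcmem.1 (by
    rintro rfl; exact absurd hfc hfs0.ne)
  have hαs0 : s0 < α := lt_of_lt_of_le hcs0 hαc
  have hαpos : 0 < α := lt_trans hs0pos hαs0
  have hαne : α ≠ 0 := hαpos.ne'
  have hαsq : lam / 3 < α ^ 2 := by nlinarith
  -- rewrite the sqrt argument
  have harg : 4 * α ^ 2 - 2 * gs / α = 6 * α ^ 2 - 2 * lam := by
    field_simp
    nlinarith [hroot]
  have hDpos : 0 < 4 * α ^ 2 - 2 * gs / α := by rw [harg]; nlinarith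
  refine ⟨hDpos, ?_, ?_⟩ <;>
  · rw [harg]
    have hs2 : (Real.sqrt (6 * α ^ 2 - 2 * lam)) ^ 2 = 6 * α ^ 2 - 2 * lam :=
      Real.sq_sqrt (by nlinarith)
    set s := Real.sqrt (6 * α ^ 2 - 2 * lam)
    first
    | linear_combination hroot + (α / 2) * hs2
    | linear_combination (1 / 2) * hs2
end

section
/- Let λ, 𝔤_s, α, Σ be as follows: α > 0 satisfies α³ − λα + 𝔤_s = 0 and Σ = (1/2)√(4α² − 2𝔤_s/α) > 0. Define Z₁(T) = α + Σ²/(sinh(ΣT)(Σ cosh(ΣT) + α sinh(ΣT))) and Z₀(T) = (𝔤_s/(2α))(1 − Σ²/(Σ cosh(ΣT) + α sinh(ΣT))²) for T > 0. Then Z₁′(T) = λ − Z₁(T)² − 2Z₀(T) and Z₀′(T) = 2Z₁(T)Z₀(T) − 𝔤_s. -/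
set_option maxHeartbeats 2000000 in
/-- With `α > 0` solving `α³ - λα + 𝔤ₛ = 0` and `Σ = (1/2)√(4α² - 2𝔤ₛ/α) > 0`, the
continuum amplitudes
`Z₁(T) = α + Σ²/(sinh(ΣT)(Σcosh(ΣT) + αsinh(ΣT)))` and
`Z₀(T) = (𝔤ₛ/(2α))(1 - Σ²/(Σcosh(ΣT) + αsinh(ΣT))²)`
satisfy `Z₁' = λ - Z₁² - 2Z₀` and `Z₀' = 2Z₁Z₀ - 𝔤ₛ` for `T > 0`. -/
theorem stmt_10 (lam gs α S T : ℝ) (hα : 0 < α) (hgs : 0 < gs)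
    (hroot : α ^ 3 - lam * α + gs = 0)
    (hSdef : S = (1 / 2) * Real.sqrt (4 * α ^ 2 - 2 * gs / α)) (hS : 0 < S)
    (hT : 0 < T)
    (Z₁ Z₀ : ℝ → ℝ)
    (hZ₁ : Z₁ = fun t => α + S ^ 2 /
      (Real.sinh (S * t) * (S * Real.cosh (S * t) + α * Real.sinh (S * t))))
    (hZ₀ : Z₀ = fun t => (gs / (2 * α)) *
      (1 - S ^ 2 / (S * Real.cosh (S * t) + α * Real.sinh (S * t)) ^ 2)) :
    HasDerivAt Z₁ (lam - (Z₁ T) ^ 2 - 2 * Z₀ T) T ∧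
      HasDerivAt Z₀ (2 * Z₁ T * Z₀ T - gs) T := by
  have hα0 : α ≠ 0 := ne_of_gt hα
  have harg : (0:ℝ) < 4 * α ^ 2 - 2 * gs / α := by
    by_contra h
    push_neg at h
    rw [hSdef, Real.sqrt_eq_zero_of_nonpos h] at hS
    simp at hS
  have hS2 : 2 * α * S ^ 2 = 2 * α ^ 3 - gs := by
    have h : S ^ 2 = (1/4) * (4 * α ^ 2 - 2 * gs / α) := by
      rw [hSdef, mul_pow, Real.sq_sqrt harg.le]; ring
    field_simp at h
    nlinarith [h]
  have hlam : lam * α = α ^ 3 + gs := by linarith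
  set s := Real.sinh (S * T) with hs
  set c := Real.cosh (S * T) with hc
  have hs0 : 0 < s := Real.sinh_pos_iff.2 (by positivity)
  have hc0 : 0 < c := Real.cosh_pos _
  have hcs : c ^ 2 - s ^ 2 = 1 := Real.cosh_sq_sub_sinh_sq _
  have hD : 0 < S * c + α * s := by positivity
  have hD0 : S * c + α * s ≠ 0 := ne_of_gt hD
  have hsD0 : s * (S * c + α * s) ≠ 0 := by positivity
  have hs' : HasDerivAt (fun t => Real.sinh (S * t)) (c * S) T := by
    simpa using ((hasDerivAt_id T).const_mul S).sinh
  have hc' : HasDerivAt (fun t => Real.cosh (S * t)) (s * S) T := by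
    simpa using ((hasDerivAt_id T).const_mul S).cosh
  have hDd : HasDerivAt (fun t => S * Real.cosh (S * t) + α * Real.sinh (S * t))
      (S * (s * S) + α * (c * S)) T := (hc'.const_mul S).add (hs'.const_mul α)
  have hsDd : HasDerivAt (fun t => Real.sinh (S * t) * (S * Real.cosh (S * t) + α * Real.sinh (S * t)))
      (c * S * (S * c + α * s) + s * (S * (s * S) + α * (c * S))) T := hs'.mul hDd
  constructor
  · have h1 := (hasDerivAt_const T α).add ((hasDerivAt_const T (S ^ 2)).div hsDd hsD0)
    rw [hZ₁, hZ₀]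
    refine HasDerivAt.congr_deriv h1 ?_
    field_simp
    simp only [← hs, ← hc]
    linear_combination (-(s ^ 2 * (S * c + α * s) ^ 2)) * hlam + (-(s ^ 2 * S ^ 2)) * hS2 + (-(α * S ^ 4)) * hcs
  · have h0 := (((hasDerivAt_const T (S ^ 2)).div (hDd.pow 2)
      (pow_ne_zero 2 hD0)).const_sub 1).const_mul (gs / (2 * α))
    rw [hZ₁, hZ₀]
    refine HasDerivAt.congr_deriv h0 ?_
    push_cast
    simp only [Pi.pow_apply]
    field_simp
    simp only [← hs, ← hc]
    linear_combination (-2 * S ^ 4) * hcs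
end

section
/- With α, Σ, λ, 𝔤_s and Z₁(T) as above (α³ − λα + 𝔤_s = 0, Σ² = α² − 𝔤_s/(2α) > 0), the function Z₁(T) = α + Σ²/(sinh(ΣT)(Σ cosh(ΣT) + α sinh(ΣT))) satisfies Z₁″(T) = 2(Z₁(T)³ − λ Z₁(T) + 𝔤_s) for all T > 0. -/
noncomputable def Df (S α t : ℝ) : ℝ :=
  Real.sinh (S*t) * (S * Real.cosh (S*t) + α * Real.sinh (S*t))

noncomputable def D1f (S α t : ℝ) : ℝ :=
  S * Real.cosh (S*t) * (S * Real.cosh (S*t) + α * Real.sinh (S*t))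
  + Real.sinh (S*t) * (S * (S * Real.sinh (S*t)) + α * (S * Real.cosh (S*t)))

noncomputable def D2f (S α t : ℝ) : ℝ :=
  (S * (S * Real.sinh (S*t)) * (S * Real.cosh (S*t) + α * Real.sinh (S*t))
   + S * Real.cosh (S*t) * (S * (S * Real.sinh (S*t)) + α * (S * Real.cosh (S*t))))
  + ((S * Real.cosh (S*t)) * (S * (S * Real.sinh (S*t)) + α * (S * Real.cosh (S*t)))
   + Real.sinh (S*t) * (S * (S * (S * Real.cosh (S*t))) + α * (S * (S * Real.sinh (S*t)))))

lemma hasDerivAt_sinhS (S t : ℝ) :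
    HasDerivAt (fun t => Real.sinh (S*t)) (S * Real.cosh (S*t)) t := by
  have h := (Real.hasDerivAt_sinh (S*t)).comp t ((hasDerivAt_id t).const_mul S)
  simp only [Function.comp_def, id_eq, mul_one] at h
  simpa [mul_comm] using h

lemma hasDerivAt_coshS (S t : ℝ) :
    HasDerivAt (fun t => Real.cosh (S*t)) (S * Real.sinh (S*t)) t := by
  have h := (Real.hasDerivAt_cosh (S*t)).comp t ((hasDerivAt_id t).const_mul S)
  simp only [Function.comp_def, id_eq, mul_one] at h
  simpa [mul_comm] using h

lemma hasDerivAt_Df (S α t : ℝ) : HasDerivAt (fun t => Df S α t) (D1f S α t) t := by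
  have := (hasDerivAt_sinhS S t).mul
    (((hasDerivAt_coshS S t).const_mul S).add ((hasDerivAt_sinhS S t).const_mul α))
  exact this

lemma hasDerivAt_D1f (S α t : ℝ) : HasDerivAt (fun t => D1f S α t) (D2f S α t) t := by
  have := ((((hasDerivAt_coshS S t).const_mul S).mul
      (((hasDerivAt_coshS S t).const_mul S).add ((hasDerivAt_sinhS S t).const_mul α))).add
    ((hasDerivAt_sinhS S t).mul
      ((((hasDerivAt_sinhS S t).const_mul S).const_mul S).add
       (((hasDerivAt_coshS S t).const_mul S).const_mul α))))
  exact this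

/-- With `α > 0` solving `α³ - λα + 𝔤ₛ = 0` and `Σ = √(α² - 𝔤ₛ/(2α)) > 0`, the function
`Z₁(T) = α + Σ²/(sinh(ΣT)(Σcosh(ΣT) + αsinh(ΣT)))` satisfies the second-order ODE
`Z₁'' = 2(Z₁³ - λZ₁ + 𝔤ₛ)` for all `T > 0`. -/
theorem stmt_11 (lam gs α S T : ℝ) (hα : 0 < α) (hgs : 0 < gs)
    (hroot : α ^ 3 - lam * α + gs = 0)
    (hpos : 0 < α ^ 2 - gs / (2 * α))
    (hSdef : S = Real.sqrt (α ^ 2 - gs / (2 * α)))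
    (hT : 0 < T)
    (Z₁ : ℝ → ℝ)
    (hZ₁ : Z₁ = fun t => α + S ^ 2 /
      (Real.sinh (S * t) * (S * Real.cosh (S * t) + α * Real.sinh (S * t)))) :
    deriv (deriv Z₁) T = 2 * ((Z₁ T) ^ 3 - lam * Z₁ T + gs) := by
  have hS : 0 < S := by rw [hSdef]; exact Real.sqrt_pos.2 hpos
  have hS2 : S ^ 2 = α ^ 2 - gs / (2 * α) := by rw [hSdef]; exact Real.sq_sqrt hpos.le
  have hDpos : ∀ t : ℝ, 0 < t → 0 < Df S α t := by
    intro t ht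
    have hsh : 0 < Real.sinh (S * t) := Real.sinh_pos_iff.2 (by positivity)
    have hch : 0 < Real.cosh (S * t) := Real.cosh_pos _
    unfold Df; positivity
  -- derivative of Z₁ on (0,∞)
  have hF : ∀ t : ℝ, 0 < t →
      HasDerivAt Z₁ (-(S ^ 2 * D1f S α t) / (Df S α t) ^ 2) t := by
    intro t ht
    have hne : Df S α t ≠ 0 := (hDpos t ht).ne'
    have h := ((hasDerivAt_const t (S ^ 2)).div (hasDerivAt_Df S α t) hne).const_add α
    rw [hZ₁]
    exact h.congr_deriv (by ring)
  have hev : deriv Z₁ =ᶠ[nhds T] fun t => -(S ^ 2 * D1f S α t) / (Df S α t) ^ 2 := by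
    filter_upwards [Ioi_mem_nhds hT] with t ht
    exact (hF t ht).deriv
  rw [hev.deriv_eq]
  -- second derivative
  have hne : Df S α T ≠ 0 := (hDpos T hT).ne'
  have hne2 : (Df S α T) ^ 2 ≠ 0 := pow_ne_zero _ hne
  have hD2 : HasDerivAt (fun t => -(S ^ 2 * D1f S α t) / (Df S α t) ^ 2)
      ((-(S ^ 2 * D2f S α T) * (Df S α T) ^ 2 -
        -(S ^ 2 * D1f S α T) * (2 * Df S α T * D1f S α T)) / ((Df S α T) ^ 2) ^ 2) T := by
    have hnum : HasDerivAt (fun t => -(S ^ 2 * D1f S α t)) (-(S ^ 2 * D2f S α T)) T :=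
      (((hasDerivAt_D1f S α T).const_mul (S ^ 2))).neg
    have hden : HasDerivAt (fun t => (Df S α t) ^ 2) (2 * Df S α T * D1f S α T) T := by
      have := (hasDerivAt_Df S α T).fun_pow 2
      simpa [mul_comm, mul_assoc] using this
    exact hnum.div hden hne2
  rw [hD2.deriv, hZ₁]
  -- algebra
  have hlam : lam = 3 * α ^ 2 - 2 * S ^ 2 := by
    have h1 : gs = 2 * α ^ 3 - 2 * α * S ^ 2 := by
      field_simp at hS2; nlinarith [hS2]
    have : lam * α = α ^ 3 + gs := by linarith
    have hα' : α ≠ 0 := hα.ne'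
    field_simp [h1] at this ⊢
    nlinarith [this]
  have hgs' : gs = 2 * α ^ 3 - 2 * α * S ^ 2 := by
    field_simp at hS2; nlinarith [hS2]
  have hc : Real.cosh (S * T) ^ 2 = Real.sinh (S * T) ^ 2 + 1 := Real.cosh_sq (S * T)
  unfold Df D1f D2f at *
  rw [hlam, hgs']
  field_simp
  linear_combination ((2)*S^6*(Real.cosh (S*T))^2 + (6)*S^5*(Real.cosh (S*T))*(Real.sinh (S*T))*α + (6)*S^4*(Real.sinh (S*T))^2*α^2 + (-2)*S^6*(Real.sinh (S*T))^2 + (2)*S^6) * hc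
end

section
/- With α, Σ, 𝔤_s as above and Z₁(T) = α + Σ²/(sinh(ΣT)(Σ cosh(ΣT) + α sinh(ΣT))), one has Z₁′(T) = −(Z₁(T) − α)·√((Z₁(T) + α)² − 2𝔤_s/α) for all T > 0. -/
/-- With `α > 0` solving `α³ - λα + 𝔤ₛ = 0` and `Σ = √(α² - 𝔤ₛ/(2α)) > 0`, the function
`Z₁(T) = α + Σ²/(sinh(ΣT)(Σcosh(ΣT) + αsinh(ΣT)))` satisfies the characteristic equation
`Z₁'(T) = -(Z₁(T) - α)·√((Z₁(T) + α)² - 2𝔤ₛ/α)` for all `T > 0`. -/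
theorem stmt_12 (lam gs α S T : ℝ) (hα : 0 < α) (hgs : 0 < gs)
    (hroot : α ^ 3 - lam * α + gs = 0)
    (hpos : 0 < α ^ 2 - gs / (2 * α))
    (hSdef : S = Real.sqrt (α ^ 2 - gs / (2 * α)))
    (hT : 0 < T)
    (Z₁ : ℝ → ℝ)
    (hZ₁ : Z₁ = fun t => α + S ^ 2 /
      (Real.sinh (S * t) * (S * Real.cosh (S * t) + α * Real.sinh (S * t)))) :
    HasDerivAt Z₁
      (-(Z₁ T - α) * Real.sqrt ((Z₁ T + α) ^ 2 - 2 * gs / α)) T := by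
  have hS : 0 < S := by rw [hSdef]; exact Real.sqrt_pos.mpr hpos
  have hS2 : S ^ 2 = α ^ 2 - gs / (2 * α) := by
    rw [hSdef, sq, Real.mul_self_sqrt hpos.le]
  have hgs2 : gs = 2 * α * (α ^ 2 - S ^ 2) := by
    field_simp at hS2
    linarith [hS2]
  set s := Real.sinh (S * T) with hs_def
  set c := Real.cosh (S * T) with hc_def
  have hs : 0 < s := Real.sinh_pos_iff.mpr (mul_pos hS hT)
  have hc : 0 < c := Real.cosh_pos _
  have hc2 : c ^ 2 = 1 + s ^ 2 := by
    rw [hc_def, hs_def, Real.cosh_sq]; ring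
  set f : ℝ := s * (S * c + α * s) with hf_def
  have hf : 0 < f := mul_pos hs (by positivity)
  -- derivative of inner functions
  have h1 : HasDerivAt (fun t : ℝ => S * t) S T := by
    simpa using (hasDerivAt_id T).const_mul S
  have hsinh : HasDerivAt (fun t => Real.sinh (S * t)) (c * S) T := h1.sinh
  have hcosh : HasDerivAt (fun t => Real.cosh (S * t)) (s * S) T := h1.cosh
  have hD : HasDerivAt (fun t => Real.sinh (S * t) * (S * Real.cosh (S * t) + α * Real.sinh (S * t)))
      (c * S * (S * c + α * s) + s * (S * (s * S) + α * (c * S))) T :=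
    hsinh.mul ((hcosh.const_mul S).add (hsinh.const_mul α))
  set D' : ℝ := c * S * (S * c + α * s) + s * (S * (s * S) + α * (c * S)) with hD'_def
  have hD'pos : 0 < D' := by
    have : 0 < c * S * (S * c + α * s) := by positivity
    have h2 : 0 < s * (S * (s * S) + α * (c * S)) := by positivity
    linarith
  have hdiv : HasDerivAt (fun t => S ^ 2 /
      (Real.sinh (S * t) * (S * Real.cosh (S * t) + α * Real.sinh (S * t))))
      ((0 * f - S ^ 2 * D') / f ^ 2) T :=
    (hasDerivAt_const T (S ^ 2)).div hD (ne_of_gt hf)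
  have hZT : Z₁ T = α + S ^ 2 / f := by rw [hZ₁]
  -- key polynomial identity
  have key : (2 * α * f + S ^ 2) ^ 2 - (4 * α ^ 2 - 4 * S ^ 2) * f ^ 2 = D' ^ 2 := by
    have hcoef : D' ^ 2 - ((2 * α * f + S ^ 2) ^ 2 - (4 * α ^ 2 - 4 * S ^ 2) * f ^ 2)
        = (S ^ 4 * (1 + c ^ 2 - s ^ 2) + 4 * α * S ^ 3 * s * c + 4 * α ^ 2 * S ^ 2 * s ^ 2)
          * (c ^ 2 - (1 + s ^ 2)) := by
      rw [hD'_def, hf_def]; ring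
    have h0 : c ^ 2 - (1 + s ^ 2) = 0 := by rw [hc2]; ring
    rw [h0, mul_zero] at hcoef
    linarith [hcoef]
  -- rewrite the sqrt argument
  have hfne : f ≠ 0 := ne_of_gt hf
  have hαne : α ≠ 0 := ne_of_gt hα
  have harg : (Z₁ T + α) ^ 2 - 2 * gs / α = (D' / f) ^ 2 := by
    rw [hZT, hgs2]
    have step : (α + S ^ 2 / f + α) ^ 2 - 2 * (2 * α * (α ^ 2 - S ^ 2)) / α
        = ((2 * α * f + S ^ 2) ^ 2 - (4 * α ^ 2 - 4 * S ^ 2) * f ^ 2) / f ^ 2 := by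
      field_simp
      ring
    rw [step, key, div_pow]
  have hsqrt : Real.sqrt ((Z₁ T + α) ^ 2 - 2 * gs / α) = D' / f := by
    rw [harg, Real.sqrt_sq (by positivity)]
  have heq : -(Z₁ T - α) * (D' / f) = (0 * f - S ^ 2 * D') / f ^ 2 := by
    rw [hZT]
    field_simp
    ring
  rw [hsqrt, heq, hZ₁]
  exact hdiv.const_add α
end

section
/- Let λ > 0 and let W(X) = (−(X² − λ) + (X − α)√((X+α)² − 2𝔤_s/α))/(2𝔤_s) with α the largest root of α³ − λα + 𝔤_s = 0 and 0 < 𝔤_s small enough that 27𝔤_s² < 4λ³. Then X·W(X) → 1 as X → ∞. -/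
/-- For `λ > 0`, `0 < 𝔤ₛ` with `27𝔤ₛ² < 4λ³`, and `α` the largest root of
`α³ - λα + 𝔤ₛ = 0`, the generalized CDT disk amplitude
`W(X) = (-(X² - λ) + (X - α)√((X+α)² - 2𝔤ₛ/α))/(2𝔤ₛ)` satisfies `X·W(X) → 1` as
`X → ∞`. -/
theorem stmt_15 (lam gs α : ℝ) (hlam : 0 < lam) (hgs : 0 < gs)
    (hcond : 27 * gs ^ 2 < 4 * lam ^ 3)
    (hroot : α ^ 3 - lam * α + gs = 0)
    (hmax : ∀ β : ℝ, β ^ 3 - lam * β + gs = 0 → β ≤ α) :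
    Filter.Tendsto
      (fun X : ℝ => X * ((-(X ^ 2 - lam) +
        (X - α) * Real.sqrt ((X + α) ^ 2 - 2 * gs / α)) / (2 * gs)))
      Filter.atTop (nhds 1) := by
  -- α is positive
  have hα : 0 < α := by
    set t := Real.sqrt (lam / 3) with ht
    have ht0 : 0 < t := Real.sqrt_pos.2 (by linarith)
    have ht2 : t ^ 2 = lam / 3 := Real.sq_sqrt (by linarith)
    have h3 : t ^ 3 = (lam / 3) * t := by rw [pow_succ, ht2]
    have key : 3 * gs < 2 * lam * t := by
      by_contra h
      push_neg at h
      have h1 : (2 * lam * t) ^ 2 ≤ (3 * gs) ^ 2 := by nlinarith [mul_pos hlam ht0, hgs]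
      have h2 : (2 * lam * t) ^ 2 = 4 * lam ^ 3 / 3 := by
        rw [mul_pow, mul_pow, ht2]; ring
      nlinarith
    have hpt : t ^ 3 - lam * t + gs < 0 := by rw [h3]; linarith
    have hcont : ContinuousOn (fun x : ℝ => x ^ 3 - lam * x + gs) (Set.Icc 0 t) := by fun_prop
    have h0 : (0:ℝ) ∈ Set.Icc ((fun x : ℝ => x ^ 3 - lam * x + gs) t)
        ((fun x : ℝ => x ^ 3 - lam * x + gs) 0) := by
      constructor <;> simp <;> nlinarith
    obtain ⟨β, hβmem, hβ⟩ := intermediate_value_Icc' ht0.le hcont h0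
    have hβpos : 0 < β := by
      rcases lt_or_eq_of_le hβmem.1 with h | h
      · exact h
      · exfalso; simp [← h] at hβ; nlinarith
    exact lt_of_lt_of_le hβpos (hmax β hβ)
  have hα' : α ≠ 0 := ne_of_gt hα
  set c : ℝ := 2 * gs / α with hc
  set C : ℝ := gs * (3 * α ^ 2 + lam) / α with hC
  have hc0 : 0 ≤ c := by rw [hc]; positivity
  set h : ℝ → ℝ := fun u => (4 * gs - C * u) /
      (2 * gs * ((1 - α * u) * Real.sqrt ((1 + α * u) ^ 2 - c * u ^ 2) + (1 - lam * u ^ 2)))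
      with hh
  have hcont : ContinuousAt h 0 := by
    apply ContinuousAt.div
    · fun_prop
    · fun_prop
    · norm_num [Real.sqrt_one]
      positivity
  have h0 : h 0 = 1 := by
    simp [hh, Real.sqrt_one]
    rw [div_eq_one_iff_eq (by positivity)]
    ring
  have hlim : Filter.Tendsto (fun X : ℝ => h X⁻¹) Filter.atTop (nhds 1) := by
    rw [← h0]
    exact hcont.tendsto.comp tendsto_inv_atTop_zero
  apply hlim.congr'
  filter_upwards [Filter.eventually_ge_atTop (α + Real.sqrt c + Real.sqrt lam + 1)] with X hX
  have hsc : 0 ≤ Real.sqrt c := Real.sqrt_nonneg _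
  have hsl : 0 ≤ Real.sqrt lam := Real.sqrt_nonneg _
  have hX0 : 0 < X := by linarith
  have hXα : α < X := by linarith
  have hXl : lam < X ^ 2 := by nlinarith [Real.sq_sqrt hlam.le]
  have hXc : c ≤ (X + α) ^ 2 := by nlinarith [Real.sq_sqrt hc0]
  set S : ℝ := Real.sqrt ((X + α) ^ 2 - c) with hSdef
  have hS2 : S ^ 2 = (X + α) ^ 2 - c := Real.sq_sqrt (by linarith)
  have hSnn : 0 ≤ S := Real.sqrt_nonneg _
  have hkey : (X - α) ^ 2 * ((X + α) ^ 2 - c) - (X ^ 2 - lam) ^ 2 = 4 * gs * X - C := by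
    rw [hc, hC]
    field_simp
    linear_combination (-(2 * X ^ 2 - α ^ 2 - lam)) * hroot
  have harg : (1 + α * X⁻¹) ^ 2 - c * X⁻¹ ^ 2 = ((X + α) ^ 2 - c) / X ^ 2 := by
    field_simp
  have hsqrt : Real.sqrt ((1 + α * X⁻¹) ^ 2 - c * X⁻¹ ^ 2) = S / X := by
    rw [harg, hSdef, Real.sqrt_div (by linarith), Real.sqrt_sq hX0.le]
  have hD : 0 < (X - α) * S + (X ^ 2 - lam) :=
    add_pos_of_nonneg_of_pos (mul_nonneg (by linarith) hSnn) (by linarith)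
  show h X⁻¹ = _
  rw [hh]
  simp only
  rw [hsqrt]
  have hden : 2 * gs * ((1 - α * X⁻¹) * (S / X) + (1 - lam * X⁻¹ ^ 2))
      = 2 * gs * (((X - α) * S + (X ^ 2 - lam)) / X ^ 2) := by
    field_simp
  rw [hden]
  rw [div_eq_iff (by positivity)]
  have : X * ((-(X ^ 2 - lam) + (X - α) * S) / (2 * gs))
      * (2 * gs * (((X - α) * S + (X ^ 2 - lam)) / X ^ 2))
      = X⁻¹ ^ 2 * (((X - α) * S) ^ 2 - (X ^ 2 - lam) ^ 2) * X := by
    field_simp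
    ring
  rw [this, mul_pow, hS2, hkey]
  field_simp
end

section
/- Let Q be a quadrangulation of the sphere with N faces and an integer labeling of vertices such that labels differ by exactly one along every edge. Then Q has exactly N + 2 vertices, and if G denotes the embedded planar graph built by Schaeffer's rule (drawing in each face of type (t−1,t,t+1,t) the edge from the corner labeled t+1 to the following corner labeled t, and in each face of type (t+1,t,t+1,t) the diagonal between the two corners labeled t+1), then G is connected, has N edges, and its number of faces equals the number of local minima of the labeling of Q. -/
/-!
We formalize planar maps (embedded graphs on the oriented sphere) combinatorially, in
the standard way, as a finite set `D` of darts (oriented edge-sides) together with: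
* a permutation `σ` rotating the darts counterclockwise around their initial vertex
  (vertices = cycles of `σ`),
* a fixed-point-free involution `a` exchanging the two darts of each edge
  (edges = orbits of `a`, so the number of edges is `|D|/2`),
* faces = cycles of `σ * a`; genus 0 (sphere) is expressed by Euler's formula
  `V - E + F = 2`, and connectedness by transitivity of the action of `⟨σ, a⟩`.
-/

/-- The setoid on darts whose classes are the cycles of a permutation `f`
(used for vertices, with `f = σ`, and for faces, with `f = σ * a`). -/
def cycleSetoid {D : Type*} (f : Equiv.Perm D) : Setoid D :=
  ⟨f.SameCycle,
    ⟨fun x => Equiv.Perm.SameCycle.refl f x, fun h => h.symm, fun h h' => h.trans h'⟩⟩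

/-- A dart `d` starts at a local minimum of the labeling: every dart `d'` with the same
initial vertex (i.e. in the same `σ`-cycle) has `ℓ d' ≤ ℓ (a d')`, that is, the label of
the vertex is `≤` the labels of all its neighbours. -/
def IsMinDart {D : Type*} (σ a : Equiv.Perm D) (ℓ : D → ℤ) (d : D) : Prop :=
  ∀ d' : D, σ.SameCycle d d' → ℓ d' ≤ ℓ (a d')

/-- Schaeffer's rule: in each quadrangular face (a cycle `(d, φd, φ²d, φ³d)` of
`φ = σ * a`, whose corner labels are `ℓ`), one edge of the new graph `G` is drawn from
the corner `d` with maximal label: in a simple face (labels `(t+1, t, t-1, t)` around the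
face, i.e. the opposite corner is labeled `t-1`) it joins `d` to the following corner
`φ d` (labeled `t`); in a confluent face (opposite corner labeled `t+1`) it is the
diagonal joining `d` to the opposite corner `φ² d`. `SchaefferEdge σ a ℓ d d'` says that
the rule draws an edge from corner `d` to corner `d'`. -/
def SchaefferEdge {D : Type*} (σ a : Equiv.Perm D) (ℓ : D → ℤ) (d d' : D) : Prop :=
  (∀ d'' : D, (σ * a).SameCycle d d'' → ℓ d'' ≤ ℓ d) ∧
    ((ℓ ((σ * a) ((σ * a) d)) = ℓ d - 2 ∧ d' = (σ * a) d) ∨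
      (ℓ ((σ * a) ((σ * a) d)) = ℓ d ∧ d' = (σ * a) ((σ * a) d)))

/-- Adjacency in the Schaeffer graph `G`, as a relation on vertices of the
quadrangulation (represented by darts up to `σ.SameCycle`): some face contributes a
Schaeffer edge joining the two vertices. -/
def SchaefferAdj {D : Type*} (σ a : Equiv.Perm D) (ℓ : D → ℤ) (d e : D) : Prop :=
  ∃ p q : D, SchaefferEdge σ a ℓ p q ∧
    ((σ.SameCycle d p ∧ σ.SameCycle e q) ∨ (σ.SameCycle d q ∧ σ.SameCycle e p))

set_option linter.unusedSectionVars false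

namespace Stmt17Aux

set_option linter.unusedSectionVars false

variable {D : Type} [Fintype D] [DecidableEq D]
variable (σ a : Equiv.Perm D) (ℓ : D → ℤ)

lemma mul_app (d : D) : (σ * a) d = σ (a d) := rfl

lemma pow4 (hquad : ∀ d : D, Function.minimalPeriod (⇑(σ * a)) d = 4) (d : D) :
    (σ*a) ((σ*a) ((σ*a) ((σ*a) d))) = d := by
  have h := Function.iterate_minimalPeriod (f := ⇑(σ * a)) (x := d)
  rw [hquad d] at h
  simpa [Function.iterate_succ_apply'] using h

lemma phi_ne (hquad : ∀ d : D, Function.minimalPeriod (⇑(σ * a)) d = 4) (d : D) :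
    (σ*a) d ≠ d ∧ (σ*a) ((σ*a) d) ≠ d ∧ (σ*a) ((σ*a) ((σ*a) d)) ≠ d := by
  have key : ∀ n : ℕ, 0 < n → n < 4 → (⇑(σ*a))^[n] d ≠ d := by
    intro n hn h4 he
    have : Function.minimalPeriod (⇑(σ * a)) d ≤ n :=
      Function.IsPeriodicPt.minimalPeriod_le hn he
    rw [hquad d] at this; omega
  refine ⟨?_, ?_, ?_⟩
  · simpa [Function.iterate_succ_apply'] using key 1 (by norm_num) (by norm_num)
  · simpa [Function.iterate_succ_apply'] using key 2 (by norm_num) (by norm_num)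
  · simpa [Function.iterate_succ_apply'] using key 3 (by norm_num) (by norm_num)

lemma lvert_zpow (hvert : ∀ d : D, ℓ (σ d) = ℓ d) : ∀ (i : ℤ) (d : D), ℓ ((σ ^ i) d) = ℓ d := by
  have hinv : ∀ d : D, ℓ (σ⁻¹ d) = ℓ d := by
    intro d
    have := hvert (σ⁻¹ d)
    rw [show σ (σ⁻¹ d) = d from σ.apply_symm_apply d] at this
    exact this.symm
  intro i
  induction i using Int.induction_on with
  | zero => simp
  | succ i ih =>
    intro d
    rw [add_comm, zpow_add, zpow_one, Equiv.Perm.mul_apply, hvert]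
    exact ih d
  | pred i ih =>
    intro d
    rw [sub_eq_add_neg, add_comm, zpow_add, Equiv.Perm.mul_apply, zpow_neg, zpow_one, hinv]
    exact ih d

lemma lvert_sc (hvert : ∀ d : D, ℓ (σ d) = ℓ d) {x y : D} (h : σ.SameCycle x y) :
    ℓ y = ℓ x := by
  obtain ⟨i, rfl⟩ := h
  exact lvert_zpow σ ℓ hvert i x

lemma lphi (hvert : ∀ d : D, ℓ (σ d) = ℓ d) (d : D) : ℓ ((σ*a) d) = ℓ (a d) := hvert (a d)

lemma inv_eq (hquad : ∀ d : D, Function.minimalPeriod (⇑(σ * a)) d = 4) (x : D) :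
    (σ*a)⁻¹ x = (σ*a) ((σ*a) ((σ*a) x)) := by
  have := pow4 σ a hquad x
  exact (Equiv.symm_apply_eq _).2 this.symm

lemma faceMem (hquad : ∀ d : D, Function.minimalPeriod (⇑(σ * a)) d = 4) {p x : D}
    (h : (σ*a).SameCycle p x) :
    x = p ∨ x = (σ*a) p ∨ x = (σ*a) ((σ*a) p) ∨ x = (σ*a) ((σ*a) ((σ*a) p)) := by
  obtain ⟨i, rfl⟩ := h
  induction i using Int.induction_on with
  | zero => left; simp
  | succ i ih =>
    rw [add_comm, zpow_add, zpow_one, Equiv.Perm.mul_apply]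
    rcases ih with h | h | h | h <;> rw [h]
    · right; left; rfl
    · right; right; left; rfl
    · right; right; right; rfl
    · left; exact pow4 σ a hquad p
  | pred i ih =>
    rw [sub_eq_add_neg, add_comm, zpow_add, Equiv.Perm.mul_apply, zpow_neg, zpow_one]
    rcases ih with h | h | h | h <;> rw [h]
    · right; right; right; exact inv_eq σ a hquad p
    · left; exact (σ*a).symm_apply_apply _
    · right; left; rw [show ∀ y, (σ*a)⁻¹ ((σ*a) y) = y from fun y => (σ*a).symm_apply_apply y]
    · right; right; left; rw [show ∀ y, (σ*a)⁻¹ ((σ*a) y) = y from fun y => (σ*a).symm_apply_apply y]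


lemma dropnonmin {c : D} (h : ℓ (a c) = ℓ c - 1) : ¬ IsMinDart σ a ℓ c := by
  intro hmin
  have := hmin c (Equiv.Perm.SameCycle.refl σ c)
  omega

lemma nonmin_sc {d d' : D} (hsc : σ.SameCycle d d') (h : ¬ IsMinDart σ a ℓ d) :
    ¬ IsMinDart σ a ℓ d' := by
  intro hmin
  exact h (fun x hx => hmin x (hsc.symm.trans hx))

lemma nonmin_iff (hedge : ∀ d : D, ℓ (a d) = ℓ d + 1 ∨ ℓ (a d) = ℓ d - 1) {d : D}
    (h : ¬ IsMinDart σ a ℓ d) : ∃ c, σ.SameCycle d c ∧ ℓ (a c) = ℓ c - 1 := by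
  unfold IsMinDart at h
  push_neg at h
  obtain ⟨c, hsc, hc⟩ := h
  exact ⟨c, hsc, by rcases hedge c with h' | h' <;> omega⟩

section Edges

lemma adjL {p q x y : D} (he : SchaefferEdge σ a ℓ p q) (hx : σ.SameCycle x p)
    (hy : σ.SameCycle y q) : SchaefferAdj σ a ℓ x y :=
  ⟨p, q, he, Or.inl ⟨hx, hy⟩⟩

lemma adjR {p q x y : D} (he : SchaefferEdge σ a ℓ p q) (hx : σ.SameCycle x q)
    (hy : σ.SameCycle y p) : SchaefferAdj σ a ℓ x y :=
  ⟨p, q, he, Or.inr ⟨hx, hy⟩⟩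

lemma adj_symm : Symmetric (SchaefferAdj σ a ℓ) := by
  rintro x y ⟨p, q, he, h | h⟩
  · exact ⟨p, q, he, Or.inr ⟨h.2, h.1⟩⟩
  · exact ⟨p, q, he, Or.inl ⟨h.2, h.1⟩⟩

lemma rtg_symm {x y : D} (h : Relation.ReflTransGen (SchaefferAdj σ a ℓ) x y) :
    Relation.ReflTransGen (SchaefferAdj σ a ℓ) y x :=
  @Std.Symm.symm _ _ (@Relation.ReflTransGen.stdSymm _ _ ⟨fun _ _ hh => adj_symm σ a ℓ hh⟩) _ _ h

variable (hvert : ∀ d : D, ℓ (σ d) = ℓ d)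
variable (hedge : ∀ d : D, ℓ (a d) = ℓ d + 1 ∨ ℓ (a d) = ℓ d - 1)
variable (hquad : ∀ d : D, Function.minimalPeriod (⇑(σ * a)) d = 4)

include hvert hedge hquad

lemma mkSimple {p : D} (h1 : ℓ (a p) = ℓ p - 1) (h2 : ℓ (a ((σ*a) p)) = ℓ ((σ*a) p) - 1) :
    SchaefferEdge σ a ℓ p ((σ*a) p) := by
  have l1 : ℓ ((σ*a) p) = ℓ p - 1 := by rw [lphi σ a ℓ hvert]; omega
  have l2 : ℓ ((σ*a) ((σ*a) p)) = ℓ p - 2 := by rw [lphi σ a ℓ hvert]; omega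
  have l3a := hedge ((σ*a) ((σ*a) p))
  have l3 : ℓ ((σ*a) ((σ*a) ((σ*a) p))) = ℓ (a ((σ*a) ((σ*a) p))) := lphi σ a ℓ hvert _
  have l4 : ℓ ((σ*a) ((σ*a) ((σ*a) ((σ*a) p)))) = ℓ (a ((σ*a) ((σ*a) ((σ*a) p)))) :=
    lphi σ a ℓ hvert _
  rw [pow4 σ a hquad p] at l4
  have l5 := hedge ((σ*a) ((σ*a) ((σ*a) p)))
  constructor
  · intro x hx
    rcases faceMem σ a hquad hx with rfl | rfl | rfl | rfl <;> omega
  · left; exact ⟨by omega, rfl⟩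

lemma mkConfluent {p : D} (h1 : ℓ (a p) = ℓ p - 1) (h2 : ℓ ((σ*a) ((σ*a) p)) = ℓ p)
    (h3 : ℓ ((σ*a) ((σ*a) ((σ*a) p))) = ℓ p - 1) :
    SchaefferEdge σ a ℓ p ((σ*a) ((σ*a) p)) := by
  have l1 : ℓ ((σ*a) p) = ℓ p - 1 := by rw [lphi σ a ℓ hvert]; omega
  constructor
  · intro x hx
    rcases faceMem σ a hquad hx with rfl | rfl | rfl | rfl <;> omega
  · right; exact ⟨h2, rfl⟩

lemma nonmin_incident {d : D} (h : ¬ IsMinDart σ a ℓ d) :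
    ∃ p q, SchaefferEdge σ a ℓ p q ∧ (σ.SameCycle d p ∨ σ.SameCycle d q) := by
  obtain ⟨c, hdc, hc⟩ := nonmin_iff σ a ℓ hedge h
  have l1 : ℓ ((σ*a) c) = ℓ c - 1 := by rw [lphi σ a ℓ hvert]; omega
  rcases hedge ((σ*a) c) with h2 | h2
  · -- ℓ (a φ c) = ℓ c, so ℓ φ²c = ℓ c
    have l2 : ℓ ((σ*a) ((σ*a) c)) = ℓ c := by rw [lphi σ a ℓ hvert]; omega
    rcases hedge ((σ*a) ((σ*a) c)) with h3 | h3
    · -- ℓ φ³c = ℓ c + 1 : simple edge from φ³c to φ⁴c = c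
      have l3 : ℓ ((σ*a) ((σ*a) ((σ*a) c))) = ℓ c + 1 := by rw [lphi σ a ℓ hvert]; omega
      refine ⟨_, _, mkSimple σ a ℓ hvert hedge hquad
        (p := (σ*a) ((σ*a) ((σ*a) c))) ?_ ?_, ?_⟩
      · have := lphi σ a ℓ hvert ((σ*a) ((σ*a) ((σ*a) c)))
        rw [pow4 σ a hquad c] at this
        omega
      · rw [pow4 σ a hquad c]; omega
      · right; rw [pow4 σ a hquad c]; exact hdc
    · -- confluent edge from c
      have l3 : ℓ ((σ*a) ((σ*a) ((σ*a) c))) = ℓ c - 1 := by rw [lphi σ a ℓ hvert]; omega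
      exact ⟨_, _, mkConfluent σ a ℓ hvert hedge hquad hc l2 l3, Or.inl hdc⟩
  · -- simple edge from c
    exact ⟨_, _, mkSimple σ a ℓ hvert hedge hquad hc (by omega), Or.inl hdc⟩

lemma sc_rtg {x x' : D} (h : ¬ IsMinDart σ a ℓ x) (hsc : σ.SameCycle x x') :
    Relation.ReflTransGen (SchaefferAdj σ a ℓ) x x' := by
  obtain ⟨p, q, he, hd⟩ := nonmin_incident σ a ℓ hvert hedge hquad h
  rcases hd with hp | hq
  · exact Relation.ReflTransGen.head (adjL σ a ℓ he hp (Equiv.Perm.SameCycle.refl σ q))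
      (Relation.ReflTransGen.single (adjR σ a ℓ he (Equiv.Perm.SameCycle.refl σ q)
        (hsc.symm.trans hp)))
  · exact Relation.ReflTransGen.head (adjR σ a ℓ he hq (Equiv.Perm.SameCycle.refl σ p))
      (Relation.ReflTransGen.single (adjL σ a ℓ he (Equiv.Perm.SameCycle.refl σ p)
        (hsc.symm.trans hq)))

lemma getn {x : D} (h : ¬ IsMinDart σ a ℓ x) :
    ∃ n : ℕ, ℓ (a ((σ ^ n) (σ x))) = ℓ ((σ ^ n) (σ x)) - 1 := by
  obtain ⟨c, hsc, hc⟩ := nonmin_iff σ a ℓ hedge h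
  obtain ⟨i, _, hi⟩ := hsc.exists_pow_eq'
  match i, hi with
  | 0, hi =>
    refine ⟨orderOf σ - 1, ?_⟩
    have h1 : (σ ^ (orderOf σ - 1)) (σ x) = (σ ^ orderOf σ) x := by
      rw [← Equiv.Perm.mul_apply, ← pow_succ, Nat.sub_add_cancel (orderOf_pos σ)]
    rw [h1, pow_orderOf_eq_one, Equiv.Perm.one_apply]
    simp only [pow_zero, Equiv.Perm.one_apply] at hi
    rw [← hi] at hc; exact hc
  | (n+1), hi =>
    refine ⟨n, ?_⟩
    have h1 : (σ ^ n) (σ x) = (σ ^ (n+1)) x := by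
      rw [pow_succ, Equiv.Perm.mul_apply]
    rw [h1, hi]; exact hc

end Edges


section Spiral

variable (hinv : ∀ d : D, a (a d) = d)
variable (hvert : ∀ d : D, ℓ (σ d) = ℓ d)
variable (hedge : ∀ d : D, ℓ (a d) = ℓ d + 1 ∨ ℓ (a d) = ℓ d - 1)
variable (hquad : ∀ d : D, Function.minimalPeriod (⇑(σ * a)) d = 4)

include hinv hvert hedge hquad

lemma aux (k : ℕ) : ∀ (n : ℕ) (p : D), ℓ (a p) = ℓ p - 1 →
    (∀ x : D, ℓ x ≤ ℓ p + k) →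
    ℓ (a ((σ ^ n) (σ (a p)))) = ℓ ((σ ^ n) (σ (a p))) - 1 →
    Relation.ReflTransGen (SchaefferAdj σ a ℓ) p (a p) := by
  induction k using Nat.strong_induction_on with
  | _ k ihk =>
  intro n
  induction n with
  | zero =>
    intro p h1 _ h3
    simp only [pow_zero, Equiv.Perm.one_apply] at h3
    have h2 : ℓ (a ((σ*a) p)) = ℓ ((σ*a) p) - 1 := h3
    exact Relation.ReflTransGen.single
      (adjL σ a ℓ (mkSimple σ a ℓ hvert hedge hquad h1 h2)
        (Equiv.Perm.SameCycle.refl σ p) ⟨1, by simp [Equiv.Perm.mul_apply]⟩)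
  | succ n ihn =>
    intro p h1 hb h3
    by_cases hc : ℓ (a ((σ*a) p)) = ℓ ((σ*a) p) - 1
    · exact Relation.ReflTransGen.single
        (adjL σ a ℓ (mkSimple σ a ℓ hvert hedge hquad h1 hc)
          (Equiv.Perm.SameCycle.refl σ p) ⟨1, by simp [Equiv.Perm.mul_apply]⟩)
    · have l1 : ℓ ((σ*a) p) = ℓ p - 1 := by rw [lphi σ a ℓ hvert]; omega
      have hc' : ℓ (a ((σ*a) p)) = ℓ ((σ*a) p) + 1 := by
        rcases hedge ((σ*a) p) with h' | h' <;> omega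
      have hb2l : ℓ (a ((σ*a) p)) = ℓ p := by omega
      have hab2 : a (a ((σ*a) p)) = (σ*a) p := hinv _
      have hdropb2 : ℓ (a (a ((σ*a) p))) = ℓ (a ((σ*a) p)) - 1 := by rw [hab2]; omega
      have l2 : ℓ ((σ*a) ((σ*a) p)) = ℓ p := by rw [lphi σ a ℓ hvert]; omega
      -- spiral hypothesis transported to b2 = a ((σ*a) p)
      have h3' : ℓ (a ((σ ^ n) (σ (a (a ((σ*a) p)))))) =
          ℓ ((σ ^ n) (σ (a (a ((σ*a) p))))) - 1 := by
        rw [hab2]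
        have hstep : (σ ^ (n+1)) (σ (a p)) = (σ ^ n) (σ ((σ*a) p)) := by
          rw [pow_succ, Equiv.Perm.mul_apply]; rfl
        rwa [hstep] at h3
      have ihnb2 := ihn (a ((σ*a) p)) hdropb2 (fun x => by have := hb x; omega) h3'
      rw [hab2] at ihnb2
      -- ihnb2 : Rtg (a ((σ*a) p)) ((σ*a) p)
      have hnmφ : ¬ IsMinDart σ a ℓ ((σ*a) p) := by
        have hw : σ.SameCycle ((σ*a) p) ((σ ^ (n+1)) (σ (a p))) := by
          refine ⟨((n+1 : ℕ) : ℤ), ?_⟩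
          rw [zpow_natCast]
          rfl
        exact fun hmin => dropnonmin σ a ℓ h3 (fun x hx => hmin x (hw.trans hx))
      have hscap : σ.SameCycle (a p) ((σ*a) p) := ⟨1, by simp [Equiv.Perm.mul_apply]⟩
      have hscφap : σ.SameCycle ((σ*a) p) (a p) := hscap.symm
      have tail2 : Relation.ReflTransGen (SchaefferAdj σ a ℓ) (a ((σ*a) p)) (a p) :=
        ihnb2.trans (sc_rtg σ a ℓ hvert hedge hquad hnmφ hscφap)
      rcases hedge ((σ*a) ((σ*a) p)) with hz | hz
      · -- ascending opposite corner: spawn a new problem one level up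
        have l3 : ℓ ((σ*a) ((σ*a) ((σ*a) p))) = ℓ p + 1 := by rw [lphi σ a ℓ hvert]; omega
        have hk1 : 1 ≤ k := by have := hb ((σ*a) ((σ*a) ((σ*a) p))); omega
        have hp'l : ℓ (a ((σ*a) ((σ*a) p))) = ℓ p + 1 := by omega
        have hap' : a (a ((σ*a) ((σ*a) p))) = (σ*a) ((σ*a) p) := hinv _
        have hdropp' : ℓ (a (a ((σ*a) ((σ*a) p)))) = ℓ (a ((σ*a) ((σ*a) p))) - 1 := by
          rw [hap']; omega
        have hscb2 : σ.SameCycle (a ((σ*a) p)) ((σ*a) ((σ*a) p)) :=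
          ⟨1, by simp [Equiv.Perm.mul_apply]⟩
        have hnm2 : ¬ IsMinDart σ a ℓ ((σ*a) ((σ*a) p)) :=
          nonmin_sc σ a ℓ hscb2 (dropnonmin σ a ℓ hdropb2)
        obtain ⟨n', hn'⟩ := getn σ a ℓ hvert hedge hquad hnm2
        have hrec := ihk (k-1) (by omega) n' (a ((σ*a) ((σ*a) p))) hdropp'
          (fun x => by have := hb x; omega) (by rw [hap']; exact hn')
        rw [hap'] at hrec
        -- hrec : Rtg (a (φ² p)) (φ² p)
        have hd3 : ℓ (a ((σ*a) ((σ*a) ((σ*a) p)))) = ℓ ((σ*a) ((σ*a) ((σ*a) p))) - 1 := by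
          have h4 := lphi σ a ℓ hvert ((σ*a) ((σ*a) ((σ*a) p)))
          rw [pow4 σ a hquad p] at h4
          omega
        have hd4 : ℓ (a ((σ*a) ((σ*a) ((σ*a) ((σ*a) p))))) =
            ℓ ((σ*a) ((σ*a) ((σ*a) ((σ*a) p)))) - 1 := by
          rw [pow4 σ a hquad p]; exact h1
        have he := mkSimple σ a ℓ hvert hedge hquad hd3 hd4
        rw [pow4 σ a hquad p] at he
        -- he : SchaefferEdge (φ³p) p
        have step1 : SchaefferAdj σ a ℓ p (a ((σ*a) ((σ*a) p))) :=
          adjR σ a ℓ he (Equiv.Perm.SameCycle.refl σ p)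
            ⟨1, by simp [Equiv.Perm.mul_apply]⟩
        have midsc : Relation.ReflTransGen (SchaefferAdj σ a ℓ)
            ((σ*a) ((σ*a) p)) (a ((σ*a) p)) :=
          sc_rtg σ a ℓ hvert hedge hquad hnm2 hscb2.symm
        exact Relation.ReflTransGen.head step1 ((hrec.trans midsc).trans tail2)
      · -- confluent face
        have l3 : ℓ ((σ*a) ((σ*a) ((σ*a) p))) = ℓ p - 1 := by rw [lphi σ a ℓ hvert]; omega
        have he := mkConfluent σ a ℓ hvert hedge hquad h1 l2 l3
        have step1 : SchaefferAdj σ a ℓ p (a ((σ*a) p)) :=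
          adjL σ a ℓ he (Equiv.Perm.SameCycle.refl σ p)
            ⟨1, by simp [Equiv.Perm.mul_apply]⟩
        exact Relation.ReflTransGen.head step1 tail2
  -- done

end Spiral


section Conn

variable (hinv : ∀ d : D, a (a d) = d)
variable (hvert : ∀ d : D, ℓ (σ d) = ℓ d)
variable (hedge : ∀ d : D, ℓ (a d) = ℓ d + 1 ∨ ℓ (a d) = ℓ d - 1)
variable (hquad : ∀ d : D, Function.minimalPeriod (⇑(σ * a)) d = 4)

include hinv hvert hedge hquad

lemma p1 {p : D} (h1 : ℓ (a p) = ℓ p - 1) (hnm : ¬ IsMinDart σ a ℓ (a p)) :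
    Relation.ReflTransGen (SchaefferAdj σ a ℓ) p (a p) := by
  obtain ⟨n, hn⟩ := getn σ a ℓ hvert hedge hquad hnm
  haveI : Nonempty D := ⟨p⟩
  have hbd : ∀ x : D, ℓ x ≤ Finset.univ.sup' Finset.univ_nonempty ℓ :=
    fun x => Finset.le_sup' ℓ (Finset.mem_univ x)
  refine aux σ a ℓ hinv hvert hedge hquad
    ((Finset.univ.sup' Finset.univ_nonempty ℓ) - ℓ p).toNat n p h1 (fun x => ?_) hn
  have h1 := hbd x
  have h2 := hbd p
  omega

lemma edge_conn {x y₀ y : D} (h0 : ¬ IsMinDart σ a ℓ y₀) (h1 : ¬ IsMinDart σ a ℓ y)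
    (hx : σ.SameCycle x y₀) (hax : σ.SameCycle (a x) y) :
    Relation.ReflTransGen (SchaefferAdj σ a ℓ) y₀ y := by
  have hnmx : ¬ IsMinDart σ a ℓ x := nonmin_sc σ a ℓ hx.symm h0
  have hnmax : ¬ IsMinDart σ a ℓ (a x) := nonmin_sc σ a ℓ hax.symm h1
  rcases hedge x with h | h
  · -- drop at a x
    have hd : ℓ (a (a x)) = ℓ (a x) - 1 := by rw [hinv]; omega
    have hp := p1 σ a ℓ hinv hvert hedge hquad hd (by rw [hinv]; exact hnmx)
    rw [hinv] at hp
    -- hp : Rtg (a x) x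
    exact ((sc_rtg σ a ℓ hvert hedge hquad h0 hx.symm).trans
      (rtg_symm σ a ℓ hp)).trans (sc_rtg σ a ℓ hvert hedge hquad hnmax hax)
  · have hp := p1 σ a ℓ hinv hvert hedge hquad h hnmax
    exact ((sc_rtg σ a ℓ hvert hedge hquad h0 hx.symm).trans hp).trans
      (sc_rtg σ a ℓ hvert hedge hquad hnmax hax)

lemma min_go {b y : D} (hmin : IsMinDart σ a ℓ b) (hy : ¬ IsMinDart σ a ℓ y)
    (hsc : σ.SameCycle (a (σ b)) y) :
    Relation.ReflTransGen (SchaefferAdj σ a ℓ) y (a b) := by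
  have hσb : σ.SameCycle b (σ b) := ⟨1, by simp⟩
  have lσb : ℓ (σ b) = ℓ b := hvert b
  have laσb : ℓ (a (σ b)) = ℓ b + 1 := by
    have := hmin (σ b) hσb
    rcases hedge (σ b) with h | h <;> omega
  have lab : ℓ (a b) = ℓ b + 1 := by
    have := hmin b (Equiv.Perm.SameCycle.refl σ b)
    rcases hedge b with h | h <;> omega
  have hphiab : (σ*a) (a b) = σ b := by
    show σ (a (a b)) = σ b
    rw [hinv]
  have hp3 : (σ*a) ((σ*a) ((σ*a) (σ b))) = a b := by
    have pw := pow4 σ a hquad (a b)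
    rw [hphiab] at pw
    exact pw
  have hp4 : (σ*a) ((σ*a) ((σ*a) ((σ*a) (σ b)))) = σ b := by rw [hp3, hphiab]
  have l1 : ℓ ((σ*a) (σ b)) = ℓ b + 1 := by rw [lphi σ a ℓ hvert]; omega
  have l3 : ℓ ((σ*a) ((σ*a) ((σ*a) (σ b)))) = ℓ b + 1 := by rw [hp3]; omega
  have hscyφ : σ.SameCycle y ((σ*a) (σ b)) :=
    hsc.symm.trans ⟨1, by simp [Equiv.Perm.mul_apply]⟩
  rcases hedge ((σ*a) (σ b)) with hu | hu
  · -- u = t + 2 : simple face, go through the opposite corner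
    have l2 : ℓ ((σ*a) ((σ*a) (σ b))) = ℓ b + 2 := by rw [lphi σ a ℓ hvert]; omega
    -- p2 = a ((σ*a) (σ b)) : the descending dart at the opposite corner
    have hp2d : ℓ (a (a ((σ*a) (σ b)))) = ℓ (a ((σ*a) (σ b))) - 1 := by rw [hinv]; omega
    have hnmφ : ¬ IsMinDart σ a ℓ ((σ*a) (σ b)) := nonmin_sc σ a ℓ hscyφ hy
    have hp := p1 σ a ℓ hinv hvert hedge hquad hp2d (by rw [hinv]; exact hnmφ)
    rw [hinv] at hp
    -- hp : Rtg (a ((σ*a) (σ b))) ((σ*a) (σ b))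
    -- simple edge from the opposite corner to a b
    have hd3 : ℓ (a ((σ*a) ((σ*a) (σ b)))) = ℓ ((σ*a) ((σ*a) (σ b))) - 1 := by
      have h4 := lphi σ a ℓ hvert ((σ*a) ((σ*a) (σ b)))
      rw [hp3] at h4
      omega
    have hd4 : ℓ (a ((σ*a) ((σ*a) ((σ*a) (σ b))))) = ℓ ((σ*a) ((σ*a) ((σ*a) (σ b)))) - 1 := by
      rw [hp3, hinv]; omega
    have he := mkSimple σ a ℓ hvert hedge hquad hd3 hd4
    rw [hp3] at he
    -- he : SchaefferEdge (φ² (σ b)) (a b)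
    have hadj : SchaefferAdj σ a ℓ ((σ*a) ((σ*a) (σ b))) (a b) :=
      adjL σ a ℓ he (Equiv.Perm.SameCycle.refl σ _) (Equiv.Perm.SameCycle.refl σ _)
    have hmid : σ.SameCycle (a ((σ*a) (σ b))) ((σ*a) ((σ*a) (σ b))) :=
      ⟨1, by simp [Equiv.Perm.mul_apply]⟩
    have hnm2 : ¬ IsMinDart σ a ℓ (a ((σ*a) (σ b))) := dropnonmin σ a ℓ hp2d
    exact (((sc_rtg σ a ℓ hvert hedge hquad hy hscyφ).trans
      (rtg_symm σ a ℓ hp)).trans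
      (sc_rtg σ a ℓ hvert hedge hquad hnm2 hmid)).trans
      (Relation.ReflTransGen.single hadj)
  · -- u = t : confluent face, direct diagonal between the two neighbours
    have l2 : ℓ ((σ*a) ((σ*a) (σ b))) = ℓ b := by rw [lphi σ a ℓ hvert]; omega
    have hdr : ℓ (a ((σ*a) (σ b))) = ℓ ((σ*a) (σ b)) - 1 := by omega
    have hcf2 : ℓ ((σ*a) ((σ*a) ((σ*a) (σ b)))) = ℓ ((σ*a) (σ b)) := by omega
    have hcf3 : ℓ ((σ*a) ((σ*a) ((σ*a) ((σ*a) (σ b))))) = ℓ ((σ*a) (σ b)) - 1 := by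
      rw [hp4]; omega
    have he := mkConfluent σ a ℓ hvert hedge hquad (p := (σ*a) (σ b)) hdr hcf2 hcf3
    rw [hp3] at he
    -- he : SchaefferEdge (φ (σ b)) (a b)
    exact Relation.ReflTransGen.single
      (adjL σ a ℓ he hscyφ (Equiv.Perm.SameCycle.refl σ _))

lemma main_ind {d : D} : ∀ {e : D}, Relation.ReflTransGen (fun x y => σ x = y ∨ a x = y) d e →
    ∀ y₀ y : D,
    (¬ IsMinDart σ a ℓ y₀ ∧ (σ.SameCycle d y₀ ∨ σ.SameCycle (a d) y₀)) →
    (¬ IsMinDart σ a ℓ y ∧ (σ.SameCycle e y ∨ σ.SameCycle (a e) y)) →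
    Relation.ReflTransGen (SchaefferAdj σ a ℓ) y₀ y := by
  intro e h
  induction h with
  | refl =>
    rintro y₀ y ⟨h0, hs0 | hs0⟩ ⟨h1, hs1 | hs1⟩
    · exact sc_rtg σ a ℓ hvert hedge hquad h0 (hs0.symm.trans hs1)
    · exact edge_conn σ a ℓ hinv hvert hedge hquad h0 h1 hs0 hs1
    · exact rtg_symm σ a ℓ (edge_conn σ a ℓ hinv hvert hedge hquad h1 h0 hs1 hs0)
    · exact sc_rtg σ a ℓ hvert hedge hquad h0 (hs0.symm.trans hs1)
  | @tail b c hab hbc ih =>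
    rintro y₀ y hy₀ ⟨h1, hs1 | hs1⟩
    · rcases hbc with hσ | hA
      · subst hσ
        have hb1 : σ.SameCycle b (σ b) := ⟨1, by simp⟩
        exact ih y₀ y hy₀ ⟨h1, Or.inl (hb1.trans hs1)⟩
      · subst hA
        exact ih y₀ y hy₀ ⟨h1, Or.inr hs1⟩
    · rcases hbc with hσ | hA
      · subst hσ
        by_cases hbmin : IsMinDart σ a ℓ b
        · have lab : ℓ (a b) = ℓ b + 1 := by
            have := hbmin b (Equiv.Perm.SameCycle.refl σ b)
            rcases hedge b with h | h <;> omega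
          have hnmab : ¬ IsMinDart σ a ℓ (a b) :=
            dropnonmin σ a ℓ (by rw [hinv]; omega)
          have hgo := min_go σ a ℓ hinv hvert hedge hquad hbmin h1 hs1
          exact (ih y₀ (a b) hy₀ ⟨hnmab, Or.inr (Equiv.Perm.SameCycle.refl σ _)⟩).trans
            (rtg_symm σ a ℓ hgo)
        · have hnmσb : ¬ IsMinDart σ a ℓ (σ b) :=
            nonmin_sc σ a ℓ (⟨1, by simp⟩ : σ.SameCycle b (σ b)) hbmin
          have hec := edge_conn σ a ℓ hinv hvert hedge hquad hnmσb h1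
            (Equiv.Perm.SameCycle.refl σ (σ b)) hs1
          exact (ih y₀ (σ b) hy₀
            ⟨hnmσb, Or.inl ⟨1, by simp⟩⟩).trans hec
      · subst hA
        exact ih y₀ y hy₀ ⟨h1, Or.inl (by rw [hinv] at hs1; exact hs1)⟩

end Conn


section Count

variable (hvert : ∀ d : D, ℓ (σ d) = ℓ d)
variable (hedge : ∀ d : D, ℓ (a d) = ℓ d + 1 ∨ ℓ (a d) = ℓ d - 1)
variable (hquad : ∀ d : D, Function.minimalPeriod (⇑(σ * a)) d = 4)

include hvert hedge hquad in
lemma incident_nonmin {d p q : D} (he : SchaefferEdge σ a ℓ p q)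
    (hd : σ.SameCycle d p ∨ σ.SameCycle d q) : ¬ IsMinDart σ a ℓ d := by
  obtain ⟨hmax, hbr⟩ := he
  have sc1 : (σ*a).SameCycle p ((σ*a) p) := ⟨1, by simp⟩
  have sc2 : (σ*a).SameCycle p ((σ*a) ((σ*a) p)) := sc1.trans ⟨1, by simp⟩
  have sc3 : (σ*a).SameCycle p ((σ*a) ((σ*a) ((σ*a) p))) := sc2.trans ⟨1, by simp⟩
  have l1 : ℓ ((σ*a) p) = ℓ (a p) := lphi σ a ℓ hvert p
  have hdrp : ℓ (a p) = ℓ p - 1 := by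
    have := hmax _ sc1
    rcases hedge p with h | h <;> omega
  rcases hd with hd | hd
  · exact nonmin_sc σ a ℓ hd.symm (dropnonmin σ a ℓ hdrp)
  · rcases hbr with ⟨h2, rfl⟩ | ⟨h2, rfl⟩
    · -- simple : q = φ p
      have : ℓ (a ((σ*a) p)) = ℓ ((σ*a) p) - 1 := by
        have := lphi σ a ℓ hvert ((σ*a) p)
        omega
      exact nonmin_sc σ a ℓ hd.symm (dropnonmin σ a ℓ this)
    · -- confluent : q = φ² p
      have l3 : ℓ ((σ*a) ((σ*a) ((σ*a) p))) = ℓ (a ((σ*a) ((σ*a) p))) :=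
        lphi σ a ℓ hvert _
      have hle := hmax _ sc3
      have : ℓ (a ((σ*a) ((σ*a) p))) = ℓ ((σ*a) ((σ*a) p)) - 1 := by
        rcases hedge ((σ*a) ((σ*a) p)) with h | h <;> omega
      exact nonmin_sc σ a ℓ hd.symm (dropnonmin σ a ℓ this)

include hquad in
lemma quot_card :
    Nat.card (Quotient (cycleSetoid (σ * a))) * 4 = Fintype.card D := by
  classical
  have hfib : ∀ q : Quotient (cycleSetoid (σ * a)),
      Fintype.card {d : D // Quotient.mk (cycleSetoid (σ * a)) d = q} = 4 := by
    intro q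
    induction q using Quotient.inductionOn with
    | _ d =>
      have hne := phi_ne σ a hquad d
      have hinj : Function.Injective (⇑(σ*a)) := (σ*a).injective
      have ne12 : (σ*a) d ≠ (σ*a) ((σ*a) d) := fun h => hne.1 (hinj h).symm
      have ne13 : (σ*a) d ≠ (σ*a) ((σ*a) ((σ*a) d)) := fun h => hne.2.1 (hinj h).symm
      have ne23 : (σ*a) ((σ*a) d) ≠ (σ*a) ((σ*a) ((σ*a) d)) := fun h =>
        hne.1 (hinj (hinj h)).symm
      have scd1 : (σ*a).SameCycle d ((σ*a) d) := ⟨1, by simp⟩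
      have scd2 : (σ*a).SameCycle d ((σ*a) ((σ*a) d)) := scd1.trans ⟨1, by simp⟩
      have scd3 : (σ*a).SameCycle d ((σ*a) ((σ*a) ((σ*a) d))) := scd2.trans ⟨1, by simp⟩
      rw [Fintype.card_subtype]
      have hset : Finset.univ.filter
            (fun x => Quotient.mk (cycleSetoid (σ * a)) x = Quotient.mk _ d) =
          ({d, (σ*a) d, (σ*a) ((σ*a) d), (σ*a) ((σ*a) ((σ*a) d))} : Finset D) := by
        ext x
        simp only [Finset.mem_filter, Finset.mem_univ, true_and, Finset.mem_insert,
          Finset.mem_singleton, Quotient.eq]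
        constructor
        · intro hx
          have hx' : (σ*a).SameCycle d x := (Quotient.exact (Quotient.sound hx)).symm
          exact faceMem σ a hquad hx'
        · rintro (rfl | rfl | rfl | rfl)
          · exact Quotient.exact rfl
          · exact scd1.symm
          · exact scd2.symm
          · exact scd3.symm
      rw [hset]
      rw [Finset.card_insert_of_notMem (by
          simp only [Finset.mem_insert, Finset.mem_singleton]
          push_neg
          exact ⟨fun h => hne.1 h.symm, fun h => hne.2.1 h.symm, fun h => hne.2.2 h.symm⟩),
        Finset.card_insert_of_notMem (by
          simp only [Finset.mem_insert, Finset.mem_singleton]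
          push_neg
          exact ⟨ne12, ne13⟩),
        Finset.card_insert_of_notMem (by simpa using ne23),
        Finset.card_singleton]
  have hsum : Fintype.card D =
      ∑ q : Quotient (cycleSetoid (σ * a)),
        Fintype.card {d : D // Quotient.mk (cycleSetoid (σ * a)) d = q} := by
    rw [← Fintype.card_sigma]
    exact Fintype.card_congr (Equiv.sigmaFiberEquiv _).symm
  rw [Nat.card_eq_fintype_card, hsum]
  simp only [hfib, Finset.sum_const, smul_eq_mul, Finset.card_univ]

end Count

lemma card_split (P : Quotient (cycleSetoid σ) → Prop) :
    Nat.card {v : Quotient (cycleSetoid σ) // P v} +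
      Nat.card {v : Quotient (cycleSetoid σ) // ¬ P v} =
      Nat.card (Quotient (cycleSetoid σ)) := by
  classical
  have h := Set.ncard_add_ncard_compl {v : Quotient (cycleSetoid σ) | P v}
  rw [← Nat.card_coe_set_eq, ← Nat.card_coe_set_eq] at h
  have e1 : Nat.card {v : Quotient (cycleSetoid σ) // P v} =
      Nat.card ({v : Quotient (cycleSetoid σ) | P v} : Set _) := rfl
  have e2 : Nat.card {v : Quotient (cycleSetoid σ) // ¬ P v} =
      Nat.card (({v : Quotient (cycleSetoid σ) | P v} : Set _)ᶜ : Set _) := by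
    refine Nat.card_congr (Equiv.subtypeEquivRight ?_)
    intro v
    simp [Set.mem_compl_iff]
  rw [e1, e2, h]

end Stmt17Aux

/-- **Lemma 1 of the paper.** Let `Q` be a quadrangulation of the sphere with `N` faces
(`4N` darts, all faces of degree 4, genus 0 by Euler's formula) with integer labels on
its vertices differing by exactly one along every edge. Then:
1. `Q` has exactly `N + 2` vertices;
2. the Schaeffer graph `G` has `N` edges (one per face of `Q`);
3. `G` is connected: any two non-local-minimum vertices are joined by a path of
   Schaeffer edges;
4. the vertices of `G` (endpoints of Schaeffer edges) are exactly the vertices of `Q`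
   that are not local minima of the labeling;
5. consequently (Euler's formula for the connected planar map `G`, with `N` edges and
   the non-minima as vertices) the number of faces of `G`,
   `F(G) = N - V(G) + 2`, equals the number of local minima of the labeling of `Q`. -/
theorem stmt_17 {D : Type} [Fintype D] [DecidableEq D]
    (σ a : Equiv.Perm D) (ℓ : D → ℤ) (N : ℕ) (hNpos : 0 < N)
    (hinv : ∀ d : D, a (a d) = d) (hfpf : ∀ d : D, a d ≠ d)
    (hconn : ∀ d d' : D, Relation.ReflTransGen (fun x y => σ x = y ∨ a x = y) d d')
    (hvert : ∀ d : D, ℓ (σ d) = ℓ d)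
    (hedge : ∀ d : D, ℓ (a d) = ℓ d + 1 ∨ ℓ (a d) = ℓ d - 1)
    (hquad : ∀ d : D, Function.minimalPeriod (⇑(σ * a)) d = 4)
    (hcard : Fintype.card D = 4 * N)
    (hEuler : Nat.card (Quotient (cycleSetoid σ)) + Nat.card (Quotient (cycleSetoid (σ * a)))
      = Fintype.card D / 2 + 2) :
    -- (1) `Q` has `N + 2` vertices
    Nat.card (Quotient (cycleSetoid σ)) = N + 2 ∧
    -- (2) `G` has `N` edges, one per face of `Q`
    Nat.card (Quotient (cycleSetoid (σ * a))) = N ∧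
    -- (3) `G` is connected
    (∀ d e : D, ¬ IsMinDart σ a ℓ d → ¬ IsMinDart σ a ℓ e →
      Relation.ReflTransGen (SchaefferAdj σ a ℓ) d e) ∧
    -- (4) the vertices of `G` are exactly the non-local-minima of `Q`
    (∀ d : D, (∃ p q : D, SchaefferEdge σ a ℓ p q ∧ (σ.SameCycle d p ∨ σ.SameCycle d q))
      ↔ ¬ IsMinDart σ a ℓ d) ∧
    -- (5) the number of faces of `G` equals the number of local minima of `Q`
    ((N : ℤ)
        - Nat.card {v : Quotient (cycleSetoid σ) //
            ¬ ∀ d : D, Quotient.mk (cycleSetoid σ) d = v → ℓ d ≤ ℓ (a d)}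
        + 2
      = Nat.card {v : Quotient (cycleSetoid σ) //
          ∀ d : D, Quotient.mk (cycleSetoid σ) d = v → ℓ d ≤ ℓ (a d)}) := by
  classical
  have hq4 := Stmt17Aux.quot_card σ a hquad
  rw [hcard] at hq4
  have h2 : Nat.card (Quotient (cycleSetoid (σ * a))) = N := by omega
  rw [hcard, h2] at hEuler
  have h1 : Nat.card (Quotient (cycleSetoid σ)) = N + 2 := by omega
  refine ⟨h1, h2, ?_, ?_, ?_⟩
  · intro d e hd he
    exact Stmt17Aux.main_ind σ a ℓ hinv hvert hedge hquad (hconn d e) d e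
      ⟨hd, Or.inl (Equiv.Perm.SameCycle.refl σ d)⟩
      ⟨he, Or.inl (Equiv.Perm.SameCycle.refl σ e)⟩
  · intro d
    constructor
    · rintro ⟨p, q, he, hd⟩
      exact Stmt17Aux.incident_nonmin σ a ℓ hvert hedge hquad he hd
    · exact Stmt17Aux.nonmin_incident σ a ℓ hvert hedge hquad
  · have hs := Stmt17Aux.card_split σ
      (fun v => ∀ d : D, Quotient.mk (cycleSetoid σ) d = v → ℓ d ≤ ℓ (a d))
    rw [h1] at hs
    omega
end

section
/- Let M be a planar map with integer labels on its vertices differing by at most one along each edge, and suppose M has a unique local minimum v₀, labeled 0. Then for every vertex v of M, the label of v equals the graph distance from v to v₀ in M. -/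
private lemma walk_label_bound {V : Type} (G : SimpleGraph V) (ℓ : V → ℤ)
    (hlab : ∀ u v : V, G.Adj u v → |ℓ u - ℓ v| ≤ 1) :
    ∀ {a b : V} (p : G.Walk a b), |ℓ a - ℓ b| ≤ (p.length : ℤ) := by
  intro a b p
  induction p with
  | nil => simp
  | cons h q ih =>
    rename_i u c d
    calc |ℓ u - ℓ d| ≤ |ℓ u - ℓ c| + |ℓ c - ℓ d| := by
          have := abs_sub_abs_le_abs_sub (ℓ u - ℓ d) 0
          exact abs_sub_le _ _ _
      _ ≤ 1 + (q.length : ℤ) := add_le_add (hlab _ _ h) ih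
      _ = ((q.length + 1 : ℕ) : ℤ) := by push_cast; ring
      _ = _ := by simp [SimpleGraph.Walk.length_cons]

/-- Let `M` be a (connected) planar map with integer labels on its vertices differing by
at most one along each edge, having a unique local minimum `v₀`, labeled `0`. Then the
label of every vertex equals its graph distance to `v₀`. (Loops and multiple edges
affect neither distances nor the local-minimum condition, so the underlying simple
graph carries all the relevant structure.) -/
theorem stmt_18 {V : Type} [Fintype V] (G : SimpleGraph V) (hconn : G.Connected)
    (ℓ : V → ℤ)
    (hlab : ∀ u v : V, G.Adj u v → |ℓ u - ℓ v| ≤ 1)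
    (v₀ : V) (h₀ : ℓ v₀ = 0)
    (hmin : ∀ u : V, G.Adj v₀ u → ℓ v₀ ≤ ℓ u)
    (huniq : ∀ w : V, (∀ u : V, G.Adj w u → ℓ w ≤ ℓ u) → w = v₀) :
    ∀ v : V, ℓ v = (G.dist v₀ v : ℤ) := by
  -- labels are nonnegative
  have : Nonempty V := ⟨v₀⟩
  have hnonneg : ∀ v : V, 0 ≤ ℓ v := by
    obtain ⟨w, hw⟩ := Finite.exists_min ℓ
    have hwv : w = v₀ := huniq w (fun u _ => hw u)
    intro v
    calc (0 : ℤ) = ℓ v₀ := h₀.symm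
      _ = ℓ w := by rw [hwv]
      _ ≤ ℓ v := hw v
  -- upper bound
  have hub : ∀ v : V, ℓ v ≤ (G.dist v₀ v : ℤ) := by
    intro v
    obtain ⟨p, hp⟩ := hconn.exists_walk_length_eq_dist v₀ v
    have := walk_label_bound G ℓ hlab p
    rw [hp] at this
    have h1 : |ℓ v₀ - ℓ v| = ℓ v := by
      rw [h₀, zero_sub, abs_neg, abs_of_nonneg (hnonneg v)]
    linarith [le_of_abs_le this, abs_le.mp this |>.1, h1 ▸ this]
  -- lower bound, by strong induction on (ℓ v).toNat
  have hlb : ∀ n : ℕ, ∀ v : V, (ℓ v).toNat = n → (G.dist v₀ v : ℤ) ≤ ℓ v := by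
    intro n
    induction n using Nat.strong_induction_on with
    | _ n ih =>
      intro v hv
      by_cases hveq : v = v₀
      · subst hveq; simp [SimpleGraph.dist_self, h₀]
      · have hnotmin : ¬ ∀ u : V, G.Adj v u → ℓ v ≤ ℓ u := fun h => hveq (huniq v h)
        push_neg at hnotmin
        obtain ⟨u, hadj, hu⟩ := hnotmin
        have hdiff := hlab v u hadj
        have hu' : ℓ u = ℓ v - 1 := by
          rw [abs_le] at hdiff; omega
        have hun : (ℓ u).toNat < n := by
          have h0v : 0 ≤ ℓ v := hnonneg v
          have h0u : 0 ≤ ℓ u := hnonneg u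
          omega
        have hud : (G.dist v₀ u : ℤ) ≤ ℓ u := ih _ hun u rfl
        have htri : G.dist v₀ v ≤ G.dist v₀ u + G.dist u v :=
          hconn.dist_triangle
        have huv : G.dist u v ≤ 1 := by
          have : G.dist u v = 1 := (SimpleGraph.dist_eq_one_iff_adj).mpr hadj.symm
          omega
        have : G.dist v₀ v ≤ G.dist v₀ u + 1 := le_trans htri (by omega)
        have : (G.dist v₀ v : ℤ) ≤ (G.dist v₀ u : ℤ) + 1 := by exact_mod_cast this
        linarith [hud, hu'.symm.le]
  intro v
  exact le_antisymm (hub v) (hlb (ℓ v).toNat v rfl)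
end

section
/- Let Σ(T) and higher continuum data be given by: α > 0 largest root of α³ − λα + 𝔤_s = 0 and Σ = √(α² − 𝔤_s/(2α)). Then as 𝔤_s → ∞ with Λ := λ − 3(𝔤_s/2)^{2/3} held fixed, one has α = (𝔤_s/2)^{1/3} + √(Λ/3) + O(𝔤_s^{−1/3}) and Σ = (3Λ)^{1/4}(𝔤_s/2)^{1/6} + O(𝔤_s^{−1/6}). -/
open Filter Asymptotics

lemma root_bracket (Λ s K c gs : ℝ) (hΛ : 0 < Λ) (hs : 0 < s)
    (hs2 : s ^ 2 = Λ / 3) (hK6 : 6 * s * K = Λ * s + Λ + 6 * s)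
    (hc1 : 1 ≤ c) (hcK : K ≤ c) (hc3 : c ^ 3 = gs / 2)
    (α : ℝ)
    (hα : α ^ 3 - (Λ + 3 * c ^ 2) * α + gs = 0)
    (hmax : ∀ β : ℝ, β ^ 3 - (Λ + 3 * c ^ 2) * β + gs = 0 → β ≤ α) :
    c + s ≤ α ∧ α ≤ c + s + K / c := by
  have hc0 : (0:ℝ) < c := lt_of_lt_of_le one_pos hc1
  have hK0 : (0:ℝ) < K := by nlinarith
  set δ := K / c with hδ_def
  have hδ0 : 0 < δ := div_pos hK0 hc0
  have hcδ : c * δ = K := by rw [hδ_def]; field_simp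
  have hδ1 : δ ≤ 1 := by rw [hδ_def]; exact div_le_one_of_le₀ hcK hc0.le
  have hgs : gs = 2 * c ^ 3 := by linarith
  have h1 : c * s ^ 2 = c * (Λ / 3) := by rw [hs2]
  have h2 : s ^ 3 = s * (Λ / 3) := by rw [← hs2]; ring
  have h3 : c * (s * δ) = s * K := by rw [show c * (s*δ) = s * (c*δ) by ring, hcδ]
  have hfa : (c+s)^3 - (Λ + 3*c^2)*(c+s) + gs < 0 := by nlinarith [mul_pos hΛ hs]
  have hfb : 0 < (c+s+δ)^3 - (Λ + 3*c^2)*(c+s+δ) + gs := by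
    nlinarith [mul_pos hc0 (mul_pos hδ0 hδ0), pow_pos (by linarith : (0:ℝ) < s + δ) 3]
  have hivt : ∃ β ∈ Set.Icc (c+s) (c+s+δ), β^3 - (Λ+3*c^2)*β + gs = 0 := by
    have hcont : ContinuousOn (fun x : ℝ => x^3 - (Λ+3*c^2)*x + gs)
        (Set.Icc (c+s) (c+s+δ)) := by fun_prop
    have hmem : (0:ℝ) ∈ Set.Icc ((c+s)^3 - (Λ+3*c^2)*(c+s) + gs)
        ((c+s+δ)^3 - (Λ+3*c^2)*(c+s+δ) + gs) := ⟨hfa.le, hfb.le⟩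
    obtain ⟨β, hβmem, hβ⟩ := intermediate_value_Icc (by linarith : c+s ≤ c+s+δ) hcont hmem
    exact ⟨β, hβmem, hβ⟩
  obtain ⟨β, hβmem, hβ⟩ := hivt
  have hαlo : c + s ≤ α := le_trans hβmem.1 (hmax β hβ)
  refine ⟨hαlo, ?_⟩
  by_contra h
  push_neg at h
  have hfactor : (α - (c+s+δ)) * (α^2 + α*(c+s+δ) + (c+s+δ)^2 - (Λ+3*c^2))
      = -((c+s+δ)^3 - (Λ+3*c^2)*(c+s+δ) + gs) := by linear_combination hα
  have hsecond : 0 < α^2 + α*(c+s+δ) + (c+s+δ)^2 - (Λ+3*c^2) := by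
    nlinarith [mul_pos hc0 hs]
  nlinarith [mul_pos (by linarith : (0:ℝ) < α - (c+s+δ)) hsecond]

set_option maxHeartbeats 1000000

lemma sigma_sq_bounds (s K c α : ℝ) (hs : 0 < s) (hK1 : 1 ≤ K)
    (hc1 : 1 ≤ c) (hcK : K ≤ c) (hαlo : c + s ≤ α) (hαhi : α ≤ c + s + K/c) :
    3*s*c ≤ α^2 - c^3/α ∧
      α^2 - c^3/α ≤ 3*s*c + (s^3 + 12*K*(1+s+K)^2) := by
  have hc0 : (0:ℝ) < c := lt_of_lt_of_le one_pos hc1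
  have hα0 : (0:ℝ) < α := by linarith
  set δ := K / c with hδ_def
  have hK0 : (0:ℝ) < K := by linarith
  have hδ0 : 0 < δ := div_pos hK0 hc0
  have hcδ : c * δ = K := by rw [hδ_def]; field_simp
  have hδ1 : δ ≤ 1 := by rw [hδ_def]; exact div_le_one_of_le₀ hcK hc0.le
  have key : α^2 - c^3/α - 3*s*c = (α^3 - 3*s*c*α - c^3)/α := by
    field_simp; ring
  constructor
  · have hnum : 0 ≤ α^3 - 3*s*c*α - c^3 := by
      have hfac : 0 ≤ (α - (c+s)) * (α^2 + α*(c+s) + (c+s)^2 - 3*s*c) := by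
        apply mul_nonneg (by linarith)
        nlinarith [mul_pos hc0 hs, sq_nonneg s]
      nlinarith [pow_pos hs 3]
    nlinarith [key, div_nonneg hnum hα0.le]
  · have hstep : α^3 - 3*s*c*α ≤ (c+s+δ)^3 - 3*s*c*(c+s+δ) := by
      have hfac : 0 ≤ ((c+s+δ) - α) * ((c+s+δ)^2 + (c+s+δ)*α + α^2 - 3*s*c) := by
        apply mul_nonneg (by linarith)
        nlinarith [mul_pos hc0 hs, sq_nonneg s, mul_pos hδ0 hs]
      nlinarith
    have hnum : α^3 - 3*s*c*α - c^3 ≤ (s^3 + 12*K*(1+s+K)^2) * α := by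
      have hexp : (c+s+δ)^3 - 3*s*c*(c+s+δ) - c^3
          = s^3 + δ^3 + 3*K*c + 3*s^2*δ + 3*K*δ + 3*s*δ^2 + 3*s*K := by
        linear_combination (3*c + 3*δ + 3*s) * hcδ
      have hKc1 : (1:ℝ) ≤ K*c := by nlinarith
      have hδsq : δ^2 ≤ 1 := by nlinarith
      have b1 : δ^3 ≤ 1 := by nlinarith
      have b2 : 3*s^2*δ ≤ 3*s^2*(K*c) := by
        have := mul_le_mul_of_nonneg_left (le_trans hδ1 hKc1) (sq_nonneg s)
        linarith
      have b3 : 3*K*δ ≤ 3*(K*c) := by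
        have h := mul_le_mul_of_nonneg_left hδ1 hK0.le
        have h2 := mul_le_mul_of_nonneg_left hc1 hK0.le
        linarith
      have b4 : 3*s*δ^2 ≤ 3*s*(K*c) := by
        have h := mul_le_mul_of_nonneg_left (le_trans hδsq hKc1) hs.le
        linarith
      have b5 : s^3 ≤ s^3*c := by
        nlinarith [mul_nonneg (pow_pos hs 3).le (by linarith : (0:ℝ) ≤ c - 1)]
      have b6 : 3*s*K ≤ 3*s*(K*c) := by
        nlinarith [mul_nonneg (mul_pos hs hK0).le (by linarith : (0:ℝ) ≤ c - 1)]
      have b7 : 12*(K*c) + 24*s*(K*c) + 12*s^2*(K*c) ≤ 12*K*(1+s+K)^2*c := by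
        nlinarith [mul_nonneg (mul_nonneg (mul_pos hK0 hK0).le hc0.le)
          (by linarith : (0:ℝ) ≤ 2 + 2*s + K)]
      have hp1 : (0:ℝ) ≤ K*c := by positivity
      have hp2 : (0:ℝ) ≤ s*(K*c) := by positivity
      have hp3 : (0:ℝ) ≤ s^2*(K*c) := by positivity
      have hb : (c+s+δ)^3 - 3*s*c*(c+s+δ) - c^3 ≤ (s^3 + 12*K*(1+s+K)^2) * c := by
        rw [hexp]; linarith
      have hCα : (s^3 + 12*K*(1+s+K)^2) * c ≤ (s^3 + 12*K*(1+s+K)^2) * α :=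
        mul_le_mul_of_nonneg_left (by linarith) (by positivity)
      linarith
    have hdiv : (α^3 - 3*s*c*α - c^3)/α ≤ s^3 + 12*K*(1+s+K)^2 :=
      (div_le_iff₀ hα0).mpr hnum
    linarith [key]


open Filter Asymptotics


/-- DT limit of generalized CDT: with `λ = Λ + 3(𝔤ₛ/2)^{2/3}` (`Λ > 0` fixed), `α(𝔤ₛ)`
the largest root of `α³ - λα + 𝔤ₛ = 0` and `Σ = √(α² - 𝔤ₛ/(2α))`, as `𝔤ₛ → ∞` one has
`α = (𝔤ₛ/2)^{1/3} + √(Λ/3) + O(𝔤ₛ^{-1/3})` and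
`Σ = (3Λ)^{1/4}(𝔤ₛ/2)^{1/6} + O(𝔤ₛ^{-1/6})`. -/

theorem stmt_19 (Λ : ℝ) (hΛ : 0 < Λ) (α : ℝ → ℝ)
    (hroot : ∀ gs : ℝ, 0 < gs →
      (α gs) ^ 3 - (Λ + 3 * (gs / 2) ^ ((2 : ℝ) / 3)) * α gs + gs = 0 ∧
        ∀ β : ℝ, β ^ 3 - (Λ + 3 * (gs / 2) ^ ((2 : ℝ) / 3)) * β + gs = 0 → β ≤ α gs) :
    (fun gs : ℝ => α gs - ((gs / 2) ^ ((1 : ℝ) / 3) + Real.sqrt (Λ / 3)))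
        =O[atTop] (fun gs : ℝ => gs ^ (-(1 : ℝ) / 3)) ∧
      (fun gs : ℝ =>
          Real.sqrt ((α gs) ^ 2 - gs / (2 * α gs))
            - (3 * Λ) ^ ((1 : ℝ) / 4) * (gs / 2) ^ ((1 : ℝ) / 6))
        =O[atTop] (fun gs : ℝ => gs ^ (-(1 : ℝ) / 6)) := by
  
  set s := Real.sqrt (Λ / 3) with hs_def
  have hs : 0 < s := Real.sqrt_pos.mpr (by linarith)
  have hs2 : s ^ 2 = Λ / 3 := Real.sq_sqrt (by linarith)
  set K := (Λ * s + Λ) / (6 * s) + 1 with hK_def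
  have hK6 : 6 * s * K = Λ * s + Λ + 6 * s := by
    rw [hK_def]; field_simp; try ring
  have hK1 : (1:ℝ) ≤ K := by
    rw [hK_def]
    have : 0 ≤ (Λ * s + Λ) / (6 * s) := by positivity
    linarith
  set C₀ : ℝ := max 1 K with hC0_def
  have hC01 : (1:ℝ) ≤ C₀ := le_max_left _ _
  have hC0K : K ≤ C₀ := le_max_right _ _
  have hC00 : (0:ℝ) < C₀ := by linarith
  set G : ℝ := 2 * C₀ ^ 3 with hG_def
  have hG0 : (0:ℝ) < G := by positivity
  set Csig : ℝ := s^3 + 12*K*(1+s+K)^2 with hCsig_def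
  have hCsig0 : 0 < Csig := by positivity
  clear_value s K C₀ G Csig
  -- the pointwise estimates
  have key : ∀ gs : ℝ, G ≤ gs →
      (0 ≤ α gs - ((gs/2) ^ ((1:ℝ)/3) + s) ∧
        α gs - ((gs/2) ^ ((1:ℝ)/3) + s) ≤ (K * 2 ^ ((1:ℝ)/3)) * gs ^ (-(1:ℝ)/3)) ∧
      (0 ≤ Real.sqrt ((α gs)^2 - gs/(2 * α gs)) - (3*Λ) ^ ((1:ℝ)/4) * (gs/2) ^ ((1:ℝ)/6) ∧
        Real.sqrt ((α gs)^2 - gs/(2 * α gs)) - (3*Λ) ^ ((1:ℝ)/4) * (gs/2) ^ ((1:ℝ)/6)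
          ≤ (Csig / (2 * (3*Λ) ^ ((1:ℝ)/4)) * 2 ^ ((1:ℝ)/6)) * gs ^ (-(1:ℝ)/6)) := by
    intro gs hgs
    have hgs0 : (0:ℝ) < gs := lt_of_lt_of_le hG0 hgs
    have hgs2 : (0:ℝ) < gs / 2 := by linarith
    set c : ℝ := (gs/2) ^ ((1:ℝ)/3) with hc_def
    clear_value c
    have hc0 : (0:ℝ) < c := by rw [hc_def]; exact Real.rpow_pos_of_pos hgs2 _
    have hc3 : c ^ 3 = gs / 2 := by
      rw [hc_def, ← Real.rpow_natCast ((gs/2) ^ ((1:ℝ)/3)) 3, ← Real.rpow_mul hgs2.le]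
      norm_num
    have hc2 : (gs/2) ^ ((2:ℝ)/3) = c ^ 2 := by
      rw [hc_def, ← Real.rpow_natCast ((gs/2) ^ ((1:ℝ)/3)) 2, ← Real.rpow_mul hgs2.le]
      norm_num
    have hC0c : C₀ ≤ c := by
      have h1 : C₀ ^ (3:ℕ) ≤ gs / 2 := by rw [hG_def] at hgs; linarith
      have h2 : ((C₀ ^ (3:ℕ) : ℝ)) ^ ((1:ℝ)/3) ≤ c := by
        rw [hc_def]
        exact Real.rpow_le_rpow (by positivity) h1 (by norm_num)
      have h3 : ((C₀ ^ (3:ℕ) : ℝ)) ^ ((1:ℝ)/3) = C₀ := by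
        rw [← Real.rpow_natCast C₀ 3, ← Real.rpow_mul hC00.le]
        norm_num
      linarith [h2, h3.symm.le]
    have hc1 : (1:ℝ) ≤ c := le_trans hC01 hC0c
    have hcK : K ≤ c := le_trans hC0K hC0c
    obtain ⟨hα, hmax⟩ := hroot gs hgs0
    rw [hc2] at hα hmax
    obtain ⟨hαlo, hαhi⟩ := root_bracket Λ s K c gs hΛ hs hs2 hK6 hc1 hcK hc3 (α gs) hα hmax
    have hα0 : (0:ℝ) < α gs := by linarith
    -- part 1
    have hKc : K / c = (K * 2 ^ ((1:ℝ)/3)) * gs ^ (-(1:ℝ)/3) := by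
      rw [hc_def, Real.div_rpow hgs0.le (by norm_num : (0:ℝ) ≤ 2)]
      rw [show (-(1:ℝ)/3) = -((1:ℝ)/3) by ring, Real.rpow_neg hgs0.le]
      have h1 : (0:ℝ) < gs ^ ((1:ℝ)/3) := Real.rpow_pos_of_pos hgs0 _
      have h2 : (0:ℝ) < (2:ℝ) ^ ((1:ℝ)/3) := Real.rpow_pos_of_pos two_pos _
      field_simp
      try ring
    refine ⟨⟨by linarith, by rw [← hKc]; linarith⟩, ?_⟩
    -- part 2
    have hgsc : gs / (2 * α gs) = c^3 / α gs := by
      rw [show gs = 2 * c^3 by linarith, mul_div_mul_left _ _ (two_ne_zero)]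
    obtain ⟨hSlo, hShi⟩ := sigma_sq_bounds s K c (α gs) hs hK1 hc1 hcK hαlo hαhi
    set T : ℝ := (3*Λ) ^ ((1:ℝ)/4) * (gs/2) ^ ((1:ℝ)/6) with hT_def
    clear_value T
    have hT0 : (0:ℝ) < T := by
      rw [hT_def]
      apply mul_pos (Real.rpow_pos_of_pos (by linarith) _) (Real.rpow_pos_of_pos hgs2 _)
    have hT2 : T ^ 2 = 3*s*c := by
      rw [hT_def, mul_pow]
      have e1 : ((3*Λ) ^ ((1:ℝ)/4))^(2:ℕ) = (3*Λ) ^ ((1:ℝ)/2) := by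
        rw [← Real.rpow_natCast ((3*Λ) ^ ((1:ℝ)/4)) 2, ← Real.rpow_mul (by linarith)]
        norm_num
      have e2 : ((gs/2) ^ ((1:ℝ)/6))^(2:ℕ) = c := by
        rw [← Real.rpow_natCast ((gs/2) ^ ((1:ℝ)/6)) 2, ← Real.rpow_mul hgs2.le, hc_def]
        norm_num
      have e3 : (3*Λ) ^ ((1:ℝ)/2) = 3*s := by
        rw [show (3:ℝ)*Λ = (3*s)^(2:ℕ) by linear_combination (-9)*hs2,
          ← Real.rpow_natCast (3*s) 2, ← Real.rpow_mul (by positivity)]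
        norm_num
      rw [e1, e2, e3]
    have hTsqrt : T = Real.sqrt (3*s*c) := by
      rw [← hT2, Real.sqrt_sq hT0.le]
    set Sg : ℝ := Real.sqrt ((α gs)^2 - gs/(2 * α gs)) with hSg_def
    clear_value Sg
    have hSgexpr : Sg = Real.sqrt ((α gs)^2 - c^3 / α gs) := by rw [hSg_def, hgsc]
    have hSgloT : T ≤ Sg := by
      rw [hSgexpr, hTsqrt]
      exact Real.sqrt_le_sqrt hSlo
    have hSgup : Sg ≤ T + Csig / (2*T) := by
      have hrhs0 : (0:ℝ) ≤ T + Csig / (2*T) := by positivity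
      have h1 : (α gs)^2 - c^3 / α gs ≤ (T + Csig/(2*T))^2 := by
        have expand : (T + Csig/(2*T))^2 = T^2 + Csig + (Csig/(2*T))^2 := by
          field_simp; ring
        linarith [sq_nonneg (Csig/(2*T)), hT2, expand, hSlo, hShi, hCsig_def]
      calc Sg ≤ Real.sqrt ((T + Csig/(2*T))^2) := by
              rw [hSgexpr]; exact Real.sqrt_le_sqrt h1
        _ = T + Csig/(2*T) := Real.sqrt_sq hrhs0
    have hfinal : Csig / (2*T) = (Csig / (2 * (3*Λ) ^ ((1:ℝ)/4)) * 2 ^ ((1:ℝ)/6)) * gs ^ (-(1:ℝ)/6) := by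
      rw [hT_def, Real.div_rpow hgs0.le (by norm_num : (0:ℝ) ≤ 2)]
      rw [show (-(1:ℝ)/6) = -((1:ℝ)/6) by ring, Real.rpow_neg hgs0.le]
      have h1 : (0:ℝ) < gs ^ ((1:ℝ)/6) := Real.rpow_pos_of_pos hgs0 _
      have h2 : (0:ℝ) < (2:ℝ) ^ ((1:ℝ)/6) := Real.rpow_pos_of_pos two_pos _
      have h3 : (0:ℝ) < (3*Λ) ^ ((1:ℝ)/4) := Real.rpow_pos_of_pos (by linarith) _
      field_simp
    exact ⟨by linarith, by rw [← hfinal]; linarith⟩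
  constructor
  · rw [Asymptotics.isBigO_iff]
    refine ⟨K * 2 ^ ((1:ℝ)/3), ?_⟩
    filter_upwards [eventually_ge_atTop G] with gs hgs
    obtain ⟨⟨h1, h2⟩, -⟩ := key gs hgs
    have hgs0 : (0:ℝ) < gs := lt_of_lt_of_le hG0 hgs
    rw [Real.norm_eq_abs, Real.norm_eq_abs, abs_of_nonneg h1,
      abs_of_pos (Real.rpow_pos_of_pos hgs0 _)]
    exact h2
  · rw [Asymptotics.isBigO_iff]
    refine ⟨Csig / (2 * (3*Λ) ^ ((1:ℝ)/4)) * 2 ^ ((1:ℝ)/6), ?_⟩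
    filter_upwards [eventually_ge_atTop G] with gs hgs
    obtain ⟨-, h1, h2⟩ := key gs hgs
    have hgs0 : (0:ℝ) < gs := lt_of_lt_of_le hG0 hgs
    rw [Real.norm_eq_abs, Real.norm_eq_abs, abs_of_nonneg h1,
      abs_of_pos (Real.rpow_pos_of_pos hgs0 _)]
    exact h2
end
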